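/- arXiv:2603.16678 — 6 statements merged into one kernel-verified Lean document; each statement's English description precedes it below -/
import Mathlib

section
/- Let finite real sequences $(a_1,\dots,a_k)$ and $(b_1,\dots,b_k)$ satisfy: for every $j \le k$, the sum of the $j$ largest among $a_1,\dots,a_k$ is at least the sum of the $j$ largest among $b_1,\dots,b_k$ (one-sided majorization $a \succeq b$). Extend both sequences by $a_{n+1} = \varepsilon_n \bar a_n + (1-\varepsilon_n)\bar a^{(n)}_{m_n}$ and $b_{n+1} \le \varepsilon_n \bar b_n + (1-\varepsilon_n)\bar b^{(n)}_{m_n}$ for all $n \ge k$, where $\varepsilon_n \in [0,1]$ and $1 \le m_n \le n$. Then for every $m \ge k$ the extended sequence $(a_1,\dots,a_m)$ one-sidedly majorizes $(b_1,\dots,b_m)$, and $a_m \ge b_m$ for all $m \ge k+1$. -/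
open Finset Filter MeasureTheory

/-- Average of the first `n` terms `a 1, …, a n`. -/
noncomputable def avgSeq (a : ℕ → ℝ) (n : ℕ) : ℝ := (∑ j ∈ Finset.Icc 1 n, a j) / n

/-- Sum of the `j` largest among `a 1, …, a n` (as a sup over `j`-element subsets). -/
noncomputable def topSum (a : ℕ → ℝ) (n j : ℕ) : ℝ :=
  sSup {x | ∃ S : Finset ℕ, S ⊆ Finset.Icc 1 n ∧ S.card = j ∧ x = ∑ i ∈ S, a i}

/-- Sum of the `j` smallest among `a 1, …, a n`. -/
noncomputable def botSum (a : ℕ → ℝ) (n j : ℕ) : ℝ :=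
  sInf {x | ∃ S : Finset ℕ, S ⊆ Finset.Icc 1 n ∧ S.card = j ∧ x = ∑ i ∈ S, a i}

/-- Average of the `j` largest among `a 1, …, a n`. -/
noncomputable def topAvg (a : ℕ → ℝ) (n j : ℕ) : ℝ := topSum a n j / j

/-- Average of the `j` smallest among `a 1, …, a n`. -/
noncomputable def botAvg (a : ℕ → ℝ) (n j : ℕ) : ℝ := botSum a n j / j

/-- The `j`-th largest among `a 1, …, a n` (decreasing rearrangement). -/
noncomputable def ordStat (a : ℕ → ℝ) (n j : ℕ) : ℝ := topSum a n j - topSum a n (j - 1)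

lemma topSet_eq (a : ℕ → ℝ) (n j : ℕ) :
    {x | ∃ S : Finset ℕ, S ⊆ Finset.Icc 1 n ∧ S.card = j ∧ x = ∑ i ∈ S, a i}
      = ↑(((Finset.Icc 1 n).powersetCard j).image fun S => ∑ i ∈ S, a i) := by
  ext x
  simp [Finset.mem_powersetCard, and_assoc, eq_comm]

lemma topSet_bdd (a : ℕ → ℝ) (n j : ℕ) :
    BddAbove {x | ∃ S : Finset ℕ, S ⊆ Finset.Icc 1 n ∧ S.card = j ∧ x = ∑ i ∈ S, a i} := by
  rw [topSet_eq]; exact (Finset.finite_toSet _).bddAbove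

lemma le_topSum (a : ℕ → ℝ) {n j : ℕ} {S : Finset ℕ} (hS : S ⊆ Finset.Icc 1 n)
    (hc : S.card = j) : ∑ i ∈ S, a i ≤ topSum a n j :=
  le_csSup (topSet_bdd a n j) ⟨S, hS, hc, rfl⟩

lemma topSum_le (a : ℕ → ℝ) {n j : ℕ} (hj : j ≤ n) {c : ℝ}
    (h : ∀ S : Finset ℕ, S ⊆ Finset.Icc 1 n → S.card = j → ∑ i ∈ S, a i ≤ c) :
    topSum a n j ≤ c := by
  obtain ⟨T, hT, hTc⟩ := Finset.exists_subset_card_eq (s := Finset.Icc 1 n) (n := j)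
    (by simpa [Nat.card_Icc] using hj)
  exact csSup_le ⟨_, T, hT, hTc, rfl⟩ (by rintro x ⟨S, hS, hc, rfl⟩; exact h S hS hc)

lemma exists_topSum (a : ℕ → ℝ) {n j : ℕ} (hj : j ≤ n) :
    ∃ S : Finset ℕ, S ⊆ Finset.Icc 1 n ∧ S.card = j ∧ topSum a n j = ∑ i ∈ S, a i := by
  obtain ⟨T, hT, hTc⟩ := Finset.exists_subset_card_eq (s := Finset.Icc 1 n) (n := j)
    (by simpa [Nat.card_Icc] using hj)
  have hne : {x | ∃ S : Finset ℕ, S ⊆ Finset.Icc 1 n ∧ S.card = j ∧ x = ∑ i ∈ S, a i}.Nonempty :=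
    ⟨_, T, hT, hTc, rfl⟩
  have hfin : {x | ∃ S : Finset ℕ, S ⊆ Finset.Icc 1 n ∧ S.card = j ∧ x = ∑ i ∈ S, a i}.Finite := by
    rw [topSet_eq]; exact Finset.finite_toSet _
  exact hne.csSup_mem hfin

lemma topSum_zero (a : ℕ → ℝ) (n : ℕ) : topSum a n 0 = 0 := by
  have : {x | ∃ S : Finset ℕ, S ⊆ Finset.Icc 1 n ∧ S.card = 0 ∧ x = ∑ i ∈ S, a i} = {0} := by
    ext x
    constructor
    · rintro ⟨S, hS, hc, rfl⟩
      simp [Finset.card_eq_zero.mp hc]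
    · rintro rfl
      exact ⟨∅, by simp⟩
  rw [topSum, this, csSup_singleton]

lemma topSum_self (a : ℕ → ℝ) (n : ℕ) : topSum a n n = ∑ i ∈ Finset.Icc 1 n, a i := by
  refine le_antisymm (topSum_le a le_rfl ?_) (le_topSum a le_rfl (by simp [Nat.card_Icc]))
  intro S hS hc
  have : S = Finset.Icc 1 n := Finset.eq_of_subset_of_card_le hS (by simp [Nat.card_Icc, hc])
  simp [this]

lemma topSum_mono_n (a : ℕ → ℝ) {n j : ℕ} (hj : j ≤ n) :
    topSum a n j ≤ topSum a (n + 1) j := by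
  refine topSum_le a hj fun S hS hc => le_topSum a (hS.trans ?_) hc
  exact Finset.Icc_subset_Icc_right (Nat.le_succ n)

/-- the majorization lemma. -/
theorem stmt1 (a b : ℕ → ℝ) (ε : ℕ → ℝ) (m : ℕ → ℕ) (k : ℕ) (hk : 1 ≤ k)
    (hε : ∀ n, ε n ∈ Set.Icc (0 : ℝ) 1) (hm : ∀ n, k ≤ n → 1 ≤ m n ∧ m n ≤ n)
    (hmaj : ∀ j, 1 ≤ j → j ≤ k → topSum b k j ≤ topSum a k j)
    (ha : ∀ n, k ≤ n → a (n + 1) = ε n * avgSeq a n + (1 - ε n) * topAvg a n (m n))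
    (hb : ∀ n, k ≤ n → b (n + 1) ≤ ε n * avgSeq b n + (1 - ε n) * topAvg b n (m n)) :
    (∀ M, k ≤ M → ∀ j, 1 ≤ j → j ≤ M → topSum b M j ≤ topSum a M j) ∧
    (∀ M, k + 1 ≤ M → b M ≤ a M) := by
  -- from the inductive hypothesis at level n, deduce b (n+1) ≤ a (n+1)
  have step : ∀ n, k ≤ n → (∀ j, 1 ≤ j → j ≤ n → topSum b n j ≤ topSum a n j) →
      b (n + 1) ≤ a (n + 1) := by
    intro n hn IH
    have hn1 : 1 ≤ n := le_trans hk hn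
    have hnpos : (0 : ℝ) < (n : ℝ) := by exact_mod_cast hn1
    obtain ⟨hm1, hm2⟩ := hm n hn
    have hmpos : (0 : ℝ) < (m n : ℝ) := by exact_mod_cast hm1
    have havg : avgSeq b n ≤ avgSeq a n := by
      unfold avgSeq
      rw [← topSum_self, ← topSum_self]
      exact div_le_div_of_nonneg_right (IH n hn1 le_rfl) hnpos.le |>.trans_eq rfl
    have htop : topAvg b n (m n) ≤ topAvg a n (m n) := by
      unfold topAvg
      exact div_le_div_of_nonneg_right (IH (m n) hm1 hm2) hmpos.le |>.trans_eq rfl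
    have hε0 := (hε n).1
    have hε1 : (0 : ℝ) ≤ 1 - ε n := by linarith [(hε n).2]
    calc b (n + 1) ≤ ε n * avgSeq b n + (1 - ε n) * topAvg b n (m n) := hb n hn
      _ ≤ ε n * avgSeq a n + (1 - ε n) * topAvg a n (m n) := by
          gcongr
      _ = a (n + 1) := (ha n hn).symm
  have key : ∀ M, k ≤ M → ∀ j, 1 ≤ j → j ≤ M → topSum b M j ≤ topSum a M j := by
    intro M hM
    induction M, hM using Nat.le_induction with
    | base => exact hmaj
    | succ n hn IH =>
      intro j hj1 hj2
      have hba := step n hn IH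
      refine topSum_le b hj2 fun T hT hc => ?_
      by_cases hmem : n + 1 ∈ T
      · -- split off the new element
        have hT' : T.erase (n + 1) ⊆ Finset.Icc 1 n := by
          intro i hi
          have hi1 := hT (Finset.mem_of_mem_erase hi)
          have hne := Finset.ne_of_mem_erase hi
          simp only [Finset.mem_Icc] at hi1 ⊢
          omega
        have hc' : (T.erase (n + 1)).card = j - 1 := by
          rw [Finset.card_erase_of_mem hmem, hc]
        have hcard_le : j - 1 ≤ n := by
          have := Finset.card_le_card hT'
          simpa [Nat.card_Icc, hc'] using this
        have h1 : ∑ i ∈ T, b i = ∑ i ∈ T.erase (n + 1), b i + b (n + 1) :=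
          (Finset.sum_erase_add T b hmem).symm
        have h2 : topSum b n (j - 1) ≤ topSum a n (j - 1) := by
          rcases Nat.eq_or_lt_of_le hj1 with h | h
          · simp [← h, topSum_zero]
          · exact IH (j - 1) (by omega) hcard_le
        have h3 : ∑ i ∈ T.erase (n + 1), b i ≤ topSum b n (j - 1) :=
          le_topSum b hT' hc'
        -- an optimal (j-1)-subset for a, plus element n+1
        obtain ⟨S, hS, hSc, hSeq⟩ := exists_topSum a hcard_le
        have hnotin : n + 1 ∉ S := fun h => by
          have := (Finset.mem_Icc.mp (hS h)).2; omega
        have hsub : insert (n + 1) S ⊆ Finset.Icc 1 (n + 1) := by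
          intro i hi
          rcases Finset.mem_insert.mp hi with rfl | hi
          · simp [Finset.mem_Icc]
          · have := hS hi; simp only [Finset.mem_Icc] at this ⊢; omega
        have hcardins : (insert (n + 1) S).card = j := by
          rw [Finset.card_insert_of_notMem hnotin, hSc]; omega
        have h4 : topSum a n (j - 1) + a (n + 1) ≤ topSum a (n + 1) j := by
          have := le_topSum a hsub hcardins
          rwa [Finset.sum_insert hnotin, ← hSeq, add_comm] at this
        linarith
      · have hTn : T ⊆ Finset.Icc 1 n := by
          intro i hi
          have hi1 := hT hi
          have : i ≠ n + 1 := fun h => hmem (h ▸ hi)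
          simp only [Finset.mem_Icc] at hi1 ⊢
          omega
        have hjn : j ≤ n := by
          have := Finset.card_le_card hTn
          simpa [Nat.card_Icc, hc] using this
        calc ∑ i ∈ T, b i ≤ topSum b n j := le_topSum b hTn hc
          _ ≤ topSum a n j := IH j hj1 hjn
          _ ≤ topSum a (n + 1) j := topSum_mono_n a hjn
  refine ⟨key, fun M hM => ?_⟩
  obtain ⟨n, rfl⟩ : ∃ n, M = n + 1 := ⟨M - 1, by omega⟩
  exact step n (by omega) (key n (by omega))
end

section
/- Reverse majorization: Let $\{\delta_n n\}_{n \ge k}$ be non-decreasing with $\delta_n \in (0,1]$. Suppose two sequences satisfy $a_{n+1} = \varepsilon_n \bar a_n + (1-\varepsilon_n)\bar a^{(n)}_{\delta_n n}$ and $b_{n+1} = \varepsilon_n \bar b_n + (1-\varepsilon_n)\bar b^{(n)}_{\delta_n n}$ for $n \ge k$, and there is $m \le \delta_k k$ such that the $m$ largest initial terms of $b$ all equal the average of the $m$ largest initial terms of $a$, while all other initial terms agree: $b^{(k)}_j = a^{(k)}_j$ for $m < j \le k$. If $b_n \le a^{(k)}_m$ for all $n > k$, then $a_n = b_n$ for all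 $n > k$. -/
open Finset Filter MeasureTheory

/-! ### Auxiliary development -/

/-- Top-`j` sum over an arbitrary finite index set. -/
noncomputable def tsF (a : ℕ → ℝ) (F : Finset ℕ) (j : ℕ) : ℝ :=
  sSup {x | ∃ S : Finset ℕ, S ⊆ F ∧ S.card = j ∧ x = ∑ i ∈ S, a i}

lemma topSum_eq_tsF (a : ℕ → ℝ) (n j : ℕ) : topSum a n j = tsF a (Finset.Icc 1 n) j := rfl

lemma tsF_set_eq (a : ℕ → ℝ) (F : Finset ℕ) (j : ℕ) :
    {x : ℝ | ∃ S : Finset ℕ, S ⊆ F ∧ S.card = j ∧ x = ∑ i ∈ S, a i}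
      = ↑((F.powersetCard j).image fun S => ∑ i ∈ S, a i) := by
  ext x
  simp only [Set.mem_setOf_eq, coe_image, Set.mem_image, mem_coe, mem_powersetCard]
  constructor
  · rintro ⟨S, h1, h2, rfl⟩; exact ⟨S, ⟨h1, h2⟩, rfl⟩
  · rintro ⟨S, ⟨h1, h2⟩, rfl⟩; exact ⟨S, h1, h2, rfl⟩

lemma tsF_le (a : ℕ → ℝ) {F S : Finset ℕ} {j : ℕ} (hS : S ⊆ F) (hc : S.card = j) :
    ∑ i ∈ S, a i ≤ tsF a F j := by
  rw [tsF, tsF_set_eq]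
  refine le_csSup (Finset.bddAbove _) ?_
  simp only [coe_image, Set.mem_image, mem_coe, mem_powersetCard]
  exact ⟨S, ⟨hS, hc⟩, rfl⟩

lemma tsF_exists (a : ℕ → ℝ) {F : Finset ℕ} {j : ℕ} (hj : j ≤ F.card) :
    ∃ S : Finset ℕ, S ⊆ F ∧ S.card = j ∧ tsF a F j = ∑ i ∈ S, a i := by
  obtain ⟨S₀, hS₀, hc₀⟩ := Finset.exists_subset_card_eq hj
  have hne : ((F.powersetCard j).image fun S => ∑ i ∈ S, a i).Nonempty :=
    ⟨_, Finset.mem_image_of_mem _ (by rw [mem_powersetCard]; exact ⟨hS₀, hc₀⟩)⟩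
  rw [tsF, tsF_set_eq, hne.csSup_eq_max']
  have hmem := Finset.max'_mem _ hne
  simp only [mem_image, mem_powersetCard] at hmem
  obtain ⟨S, ⟨h1, h2⟩, h3⟩ := hmem
  exact ⟨S, h1, h2, h3.symm⟩

lemma tsF_zero (a : ℕ → ℝ) (F : Finset ℕ) : tsF a F 0 = 0 := by
  have h : {x : ℝ | ∃ S : Finset ℕ, S ⊆ F ∧ S.card = 0 ∧ x = ∑ i ∈ S, a i} = {0} := by
    ext x
    simp only [Set.mem_setOf_eq, Finset.card_eq_zero, Set.mem_singleton_iff]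
    constructor
    · rintro ⟨S, -, rfl, rfl⟩; simp
    · rintro rfl; exact ⟨∅, by simp⟩
  rw [tsF, h, csSup_singleton]

lemma tsF_card (a : ℕ → ℝ) (F : Finset ℕ) : tsF a F F.card = ∑ i ∈ F, a i := by
  obtain ⟨S, hS, hc, he⟩ := tsF_exists a (le_refl F.card)
  rw [he, Finset.eq_of_subset_of_card_le hS hc.ge]

lemma sum_le_sum_of_dom {a : ℕ → ℝ} {R U : Finset ℕ} (hc : R.card = U.card)
    (h : ∀ r ∈ R, ∀ u ∈ U, a r ≤ a u) : ∑ i ∈ R, a i ≤ ∑ i ∈ U, a i := by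
  rcases U.eq_empty_or_nonempty with rfl | hU
  · rw [Finset.card_empty, Finset.card_eq_zero] at hc
    simp [hc]
  · have h1 : ∑ i ∈ R, a i ≤ R.card • U.inf' hU a :=
      Finset.sum_le_card_nsmul R a _ (fun r hr => Finset.le_inf' hU _ (fun u hu => h r hr u hu))
    have h2 : U.card • U.inf' hU a ≤ ∑ i ∈ U, a i :=
      Finset.card_nsmul_le_sum U a _ (fun u hu => Finset.inf'_le a hu)
    rw [hc] at h1
    exact le_trans h1 h2

lemma tsF_exists_dom (a : ℕ → ℝ) {F : Finset ℕ} {j : ℕ} (hj : j ≤ F.card) :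
    ∃ T : Finset ℕ, T ⊆ F ∧ T.card = j ∧ ∑ i ∈ T, a i = tsF a F j ∧
      ∀ t ∈ T, ∀ i ∈ F \ T, a i ≤ a t := by
  obtain ⟨T, hT, hc, he⟩ := tsF_exists a hj
  refine ⟨T, hT, hc, he.symm, ?_⟩
  by_contra hcon
  push_neg at hcon
  obtain ⟨t, ht, i, hi, hlt⟩ := hcon
  have hiF := (Finset.mem_sdiff.mp hi).1
  have hiT := (Finset.mem_sdiff.mp hi).2
  have hiT' : i ∉ T.erase t := fun h => hiT (Finset.mem_of_mem_erase h)
  have hT' : insert i (T.erase t) ⊆ F := by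
    intro x hx
    rcases Finset.mem_insert.mp hx with rfl | hx
    · exact hiF
    · exact hT (Finset.mem_of_mem_erase hx)
  have hj1 : 1 ≤ j := hc ▸ Finset.card_pos.mpr ⟨t, ht⟩
  have hc' : (insert i (T.erase t)).card = j := by
    rw [Finset.card_insert_of_notMem hiT', Finset.card_erase_of_mem ht, hc]
    omega
  have hsum : ∑ x ∈ insert i (T.erase t), a x = a i + (∑ x ∈ T, a x - a t) := by
    rw [Finset.sum_insert hiT', Finset.sum_erase_eq_sub ht]
  have hle := tsF_le a hT' hc'
  rw [hsum, ← he] at hle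
  linarith

/-- If `t ∈ T` where `T` achieves the top-`j` sum, then `a t` is at least the `j`-th value. -/
lemma tsF_gap_le {a : ℕ → ℝ} {F T : Finset ℕ} {j : ℕ} (hT : T ⊆ F) (hc : T.card = j)
    (he : ∑ i ∈ T, a i = tsF a F j) {t : ℕ} (ht : t ∈ T) :
    tsF a F j - tsF a F (j - 1) ≤ a t := by
  have h1 : ∑ i ∈ T.erase t, a i ≤ tsF a F (j - 1) :=
    tsF_le a (fun x hx => hT (Finset.mem_of_mem_erase hx))
      (by rw [Finset.card_erase_of_mem ht, hc])
  rw [Finset.sum_erase_eq_sub ht, he] at h1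
  linarith

/-- Splitting the top-`j` sum at a dominant subset. -/
lemma tsF_split (a : ℕ → ℝ) {F T : Finset ℕ} {j : ℕ} (hT : T ⊆ F)
    (hj1 : T.card ≤ j) (hj2 : j ≤ F.card)
    (hdom : ∀ t ∈ T, ∀ i ∈ F \ T, a i ≤ a t) :
    tsF a F j = ∑ i ∈ T, a i + tsF a (F \ T) (j - T.card) := by
  have hcsd : (F \ T).card = F.card - T.card := Finset.card_sdiff_of_subset hT
  have hcT : T.card ≤ F.card := Finset.card_le_card hT
  have hjm : j - T.card ≤ (F \ T).card := by omega
  apply le_antisymm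
  · -- take an optimal S for the LHS and rearrange it
    obtain ⟨S, hS, hSc, hSe⟩ := tsF_exists a hj2
    rw [hSe]
    have hdisj : Disjoint (S ∩ T) (S \ T) := Finset.sdiff_disjoint.symm.mono_left Finset.inter_subset_right
    have hSu : S = (S ∩ T) ∪ (S \ T) := (sup_inf_sdiff S T).symm
    have hcards : (S ∩ T).card + (S \ T).card = j := by
      rw [Finset.card_inter_add_card_sdiff, hSc]
    have hc1 : (S ∩ T).card ≤ T.card := Finset.card_le_card Finset.inter_subset_right
    -- pick R ⊆ S \ T of size T.card - (S ∩ T).card to exchange with T \ S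
    have hRcard : T.card - (S ∩ T).card ≤ (S \ T).card := by omega
    obtain ⟨R, hR, hRc⟩ := Finset.exists_subset_card_eq hRcard
    have hTS : (T \ (S ∩ T)).card = T.card - (S ∩ T).card := by
      rw [Finset.card_sdiff_of_subset Finset.inter_subset_right]
    have hRle : ∑ i ∈ R, a i ≤ ∑ i ∈ T \ (S ∩ T), a i := by
      apply sum_le_sum_of_dom (by rw [hRc, hTS])
      intro r hr u hu
      have hu' : u ∈ T := (Finset.mem_sdiff.mp hu).1
      have hr' : r ∈ F \ T := by
        have := hR hr
        rw [Finset.mem_sdiff] at this ⊢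
        exact ⟨hS this.1, this.2⟩
      exact hdom u hu' r hr'
    have hTsum : ∑ i ∈ S ∩ T, a i + ∑ i ∈ T \ (S ∩ T), a i = ∑ i ∈ T, a i := by
      rw [add_comm, Finset.sum_sdiff Finset.inter_subset_right]
    have hrest : ∑ i ∈ (S \ T) \ R, a i ≤ tsF a (F \ T) (j - T.card) := by
      apply tsF_le a
      · intro x hx
        have hx' := (Finset.mem_sdiff.mp hx).1
        rw [Finset.mem_sdiff] at hx' ⊢
        exact ⟨hS hx'.1, hx'.2⟩
      · rw [Finset.card_sdiff_of_subset hR, hRc]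
        omega
    have hsplit2 : ∑ i ∈ S \ T, a i = ∑ i ∈ R, a i + ∑ i ∈ (S \ T) \ R, a i := by
      rw [add_comm, Finset.sum_sdiff hR]
    calc ∑ i ∈ S, a i = ∑ i ∈ S ∩ T, a i + ∑ i ∈ S \ T, a i := by
          rw [← Finset.sum_union hdisj, ← hSu]
      _ = ∑ i ∈ S ∩ T, a i + (∑ i ∈ R, a i + ∑ i ∈ (S \ T) \ R, a i) := by rw [hsplit2]
      _ ≤ (∑ i ∈ S ∩ T, a i + ∑ i ∈ T \ (S ∩ T), a i) + ∑ i ∈ (S \ T) \ R, a i := by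
          linarith
      _ = ∑ i ∈ T, a i + ∑ i ∈ (S \ T) \ R, a i := by rw [hTsum]
      _ ≤ ∑ i ∈ T, a i + tsF a (F \ T) (j - T.card) := by linarith
  · obtain ⟨S', hS', hS'c, hS'e⟩ := tsF_exists a hjm
    rw [hS'e]
    have hdisj : Disjoint T S' := (Finset.sdiff_disjoint.mono_left hS').symm
    have := tsF_le a (S := T ∪ S') (F := F) (j := j)
      (Finset.union_subset hT (hS'.trans Finset.sdiff_subset))
      (by rw [Finset.card_union_of_disjoint hdisj, hS'c]; omega)
    rw [Finset.sum_union hdisj] at this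
    exact this

/-- Comparison across a disjoint union when one side agrees and the other dominates. -/
lemma tsF_union_le (a b : ℕ → ℝ) {F₁ F₁' F₂ : Finset ℕ} {j : ℕ}
    (h1 : Disjoint F₁ F₂) (h1' : Disjoint F₁' F₂)
    (hcard : F₁.card = F₁'.card)
    (hts : ∀ c, c ≤ F₁.card → tsF b F₁ c ≤ tsF a F₁' c)
    (hagree : ∀ i ∈ F₂, b i = a i)
    (hj : j ≤ F₁.card + F₂.card) :
    tsF b (F₁ ∪ F₂) j ≤ tsF a (F₁' ∪ F₂) j := by
  have hjc : j ≤ (F₁ ∪ F₂).card := by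
    rw [Finset.card_union_of_disjoint h1]; exact hj
  obtain ⟨S, hS, hSc, hSe⟩ := tsF_exists b hjc
  rw [hSe]
  have hSu : S = (S ∩ F₁) ∪ (S ∩ F₂) := by
    rw [← Finset.inter_union_distrib_left, Finset.inter_eq_left.mpr hS]
  have hdisj : Disjoint (S ∩ F₁) (S ∩ F₂) :=
    h1.mono Finset.inter_subset_right Finset.inter_subset_right
  have hcards : (S ∩ F₁).card + (S ∩ F₂).card = j := by
    rw [← Finset.card_union_of_disjoint hdisj, ← hSu, hSc]
  have hc1 : (S ∩ F₁).card ≤ F₁.card := Finset.card_le_card Finset.inter_subset_right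
  have hb1 : ∑ i ∈ S ∩ F₁, b i ≤ tsF b F₁ (S ∩ F₁).card :=
    tsF_le b Finset.inter_subset_right rfl
  have hb2 := hts _ hc1
  obtain ⟨S', hS', hS'c, hS'e⟩ := tsF_exists a (F := F₁') (j := (S ∩ F₁).card) (hcard ▸ hc1)
  have hagree2 : ∑ i ∈ S ∩ F₂, b i = ∑ i ∈ S ∩ F₂, a i :=
    Finset.sum_congr rfl fun i hi => hagree i (Finset.mem_inter.mp hi).2
  have hdisj' : Disjoint S' (S ∩ F₂) :=
    h1'.mono hS' Finset.inter_subset_right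
  have hfin : ∑ i ∈ S' ∪ (S ∩ F₂), a i ≤ tsF a (F₁' ∪ F₂) j := by
    apply tsF_le a
    · exact Finset.union_subset (hS'.trans Finset.subset_union_left)
        (Finset.inter_subset_right.trans Finset.subset_union_right)
    · rw [Finset.card_union_of_disjoint hdisj', hS'c]; omega
  rw [Finset.sum_union hdisj'] at hfin
  calc ∑ i ∈ S, b i = ∑ i ∈ S ∩ F₁, b i + ∑ i ∈ S ∩ F₂, b i := by
        rw [← Finset.sum_union hdisj, ← hSu]
    _ ≤ tsF a F₁' (S ∩ F₁).card + ∑ i ∈ S ∩ F₂, a i := by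
        rw [hagree2]; linarith
    _ = ∑ i ∈ S', a i + ∑ i ∈ S ∩ F₂, a i := by rw [hS'e]
    _ ≤ tsF a (F₁' ∪ F₂) j := hfin

lemma topSum_telescope (a : ℕ → ℝ) (k : ℕ) (j : ℕ) :
    topSum a k j = ∑ i ∈ Finset.Ioc 0 j, ordStat a k i := by
  induction j with
  | zero => simp [topSum_eq_tsF, tsF_zero]
  | succ j ih =>
    rw [← Finset.sum_Ioc_consecutive _ (Nat.zero_le j) (Nat.le_succ j), ← ih,
      Nat.Ioc_succ_singleton, Finset.sum_singleton, ordStat]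
    simp

/-- reverse majorization. -/
theorem stmt3 (a b : ℕ → ℝ) (ε : ℕ → ℝ) (d : ℕ → ℕ) (k m : ℕ) (hk : 1 ≤ k)
    (hε : ∀ n, ε n ∈ Set.Icc (0 : ℝ) 1)
    (hd : ∀ n, k ≤ n → 1 ≤ d n ∧ d n ≤ n)
    (hdmono : ∀ n, k ≤ n → d n ≤ d (n + 1))
    (hm1 : 1 ≤ m) (hmk : m ≤ d k)
    (ha : ∀ n, k ≤ n → a (n + 1) = ε n * avgSeq a n + (1 - ε n) * topAvg a n (d n))
    (hb : ∀ n, k ≤ n → b (n + 1) = ε n * avgSeq b n + (1 - ε n) * topAvg b n (d n))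
    (hbinit1 : ∀ j, 1 ≤ j → j ≤ m → ordStat b k j = topAvg a k m)
    (hbinit2 : ∀ j, m < j → j ≤ k → ordStat b k j = ordStat a k j)
    (hbd : ∀ n, k < n → b n ≤ ordStat a k m) :
    ∀ n, k < n → a n = b n := by
  have hkd := hd k le_rfl
  have hmk' : m ≤ k := hmk.trans hkd.2
  have hIcc_card : ∀ n : ℕ, (Finset.Icc 1 n).card = n := fun n => by
    rw [Nat.card_Icc]; omega
  have hm0 : (0 : ℝ) < (m : ℝ) := by exact_mod_cast hm1
  -- dominant index sets for the top-m values of a and b among 1..k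
  obtain ⟨Ta, hTa_sub, hTa_card, hTa_sum, hTa_dom⟩ :=
    tsF_exists_dom a (F := Finset.Icc 1 k) (j := m) (by rw [hIcc_card]; exact hmk')
  obtain ⟨Tb, hTb_sub, hTb_card, hTb_sum, hTb_dom⟩ :=
    tsF_exists_dom b (F := Finset.Icc 1 k) (j := m) (by rw [hIcc_card]; exact hmk')
  rw [← topSum_eq_tsF] at hTa_sum hTb_sum
  have hmA : (m : ℝ) * topAvg a k m = topSum a k m := by
    rw [topAvg]; field_simp
  have htopb : ∀ j, j ≤ m → topSum b k j = (j : ℝ) * topAvg a k m := by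
    intro j hj
    rw [topSum_telescope]
    rw [Finset.sum_congr rfl (fun i hi => hbinit1 i (Finset.mem_Ioc.mp hi).1
      ((Finset.mem_Ioc.mp hi).2.trans hj)), Finset.sum_const, Nat.card_Ioc,
      nsmul_eq_mul]
    simp
  have htopeq : ∀ j, m ≤ j → j ≤ k → topSum b k j = topSum a k j := by
    intro j hmj hjk
    rw [topSum_telescope b, topSum_telescope a,
      ← Finset.sum_Ioc_consecutive _ (Nat.zero_le m) hmj,
      ← Finset.sum_Ioc_consecutive (fun i => ordStat a k i) (Nat.zero_le m) hmj]
    have h1 : ∑ i ∈ Finset.Ioc 0 m, ordStat b k i = ∑ i ∈ Finset.Ioc 0 m, ordStat a k i := by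
      rw [← topSum_telescope, ← topSum_telescope, htopb m le_rfl, hmA]
    have h2 : ∑ i ∈ Finset.Ioc m j, ordStat b k i = ∑ i ∈ Finset.Ioc m j, ordStat a k i :=
      Finset.sum_congr rfl fun i hi => hbinit2 i (Finset.mem_Ioc.mp hi).1
        ((Finset.mem_Ioc.mp hi).2.trans hjk)
    rw [h1, h2]
  have hts_full : ∀ c : ℕ → ℝ, topSum c k k = ∑ i ∈ Finset.Icc 1 k, c i := fun c => by
    have h := tsF_card c (Finset.Icc 1 k)
    rw [hIcc_card] at h
    rw [topSum_eq_tsF, h]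
  have hinit_sum : ∑ i ∈ Finset.Icc 1 k, b i = ∑ i ∈ Finset.Icc 1 k, a i := by
    rw [← hts_full, ← hts_full, htopeq k hmk' le_rfl]
  -- value bounds on the dominant sets
  have hal_a : ∀ t ∈ Ta, ordStat a k m ≤ a t := by
    intro t ht
    have h := tsF_gap_le hTa_sub hTa_card (by rw [← topSum_eq_tsF]; exact hTa_sum) ht
    rw [← topSum_eq_tsF, ← topSum_eq_tsF] at h
    exact h
  have hAal : ordStat a k m ≤ topAvg a k m := by
    have h1 : Ta.card • ordStat a k m ≤ ∑ i ∈ Ta, a i :=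
      Finset.card_nsmul_le_sum Ta a _ hal_a
    rw [hTa_card, nsmul_eq_mul, hTa_sum, ← hmA] at h1
    exact le_of_mul_le_mul_left h1 hm0
  have hA_b : ∀ t ∈ Tb, topAvg a k m ≤ b t := by
    intro t ht
    have h := tsF_gap_le hTb_sub hTb_card (by rw [← topSum_eq_tsF]; exact hTb_sum) ht
    rw [← topSum_eq_tsF, ← topSum_eq_tsF, htopb m le_rfl, htopb (m - 1) (by omega)] at h
    have hcast : ((m - 1 : ℕ) : ℝ) = (m : ℝ) - 1 := by
      rw [Nat.cast_sub hm1, Nat.cast_one]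
    rw [hcast] at h
    have hr : (m : ℝ) * topAvg a k m - ((m : ℝ) - 1) * topAvg a k m = topAvg a k m := by
      ring
    linarith
  have hal_b : ∀ t ∈ Tb, ordStat a k m ≤ b t := fun t ht => hAal.trans (hA_b t ht)
  have hTab_sum : ∑ i ∈ Tb, b i = ∑ i ∈ Ta, a i := by
    rw [hTb_sum, hTa_sum, htopeq m le_rfl hmk']
  -- equality of residual top sums within 1..k
  have hts_small : ∀ c, c ≤ k - m →
      tsF a (Finset.Icc 1 k \ Ta) c = tsF b (Finset.Icc 1 k \ Tb) c := by
    intro c hc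
    have hsa := tsF_split a hTa_sub (by omega) (by rw [hIcc_card]; omega) hTa_dom
      (j := m + c)
    have hsb := tsF_split b hTb_sub (by omega) (by rw [hIcc_card]; omega) hTb_dom
      (j := m + c)
    rw [hTa_card] at hsa
    rw [hTb_card] at hsb
    have hmc : m + c - m = c := by omega
    rw [hmc] at hsa hsb
    rw [← topSum_eq_tsF] at hsa hsb
    have := htopeq (m + c) (by omega) (by omega)
    rw [hTa_sum] at hsa
    rw [hTb_sum, htopeq m le_rfl hmk'] at hsb
    linarith
  -- monotonicity of d from k
  have hdk_le : ∀ n, k ≤ n → d k ≤ d n := by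
    intro n
    induction n with
    | zero =>
      intro hn
      have : k = 0 := by omega
      rw [this]
    | succ n ih =>
      intro hn
      rcases Nat.lt_or_ge n k with h | h
      · have : k = n + 1 := by omega
        rw [← this]
      · exact (ih h).trans (hdmono n h)
  -- the key induction step
  have key : ∀ n, k ≤ n → (∀ i, k < i → i ≤ n → a i = b i) → a (n + 1) = b (n + 1) := by
    intro n hn hih
    have hdn1 : m ≤ d n := hmk.trans (hdk_le n hn)
    have hdn2 : d n ≤ n := (hd n hn).2
    -- average parts agree
    have hIoc_eq : ∑ i ∈ Finset.Ioc k n, a i = ∑ i ∈ Finset.Ioc k n, b i :=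
      Finset.sum_congr rfl fun i hi => hih i (Finset.mem_Ioc.mp hi).1 (Finset.mem_Ioc.mp hi).2
    have hIcc1 : ∀ p : ℕ, Finset.Icc 1 p = Finset.Ioc 0 p := fun p => Finset.Icc_add_one_left_eq_Ioc 0 p
    have hsplit_sum : ∀ c : ℕ → ℝ, ∑ i ∈ Finset.Icc 1 n, c i
        = ∑ i ∈ Finset.Icc 1 k, c i + ∑ i ∈ Finset.Ioc k n, c i := by
      intro c
      rw [hIcc1, hIcc1, ← Finset.sum_Ioc_consecutive (fun i => c i) (Nat.zero_le k) hn]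
    have hsum_n : ∑ i ∈ Finset.Icc 1 n, a i = ∑ i ∈ Finset.Icc 1 n, b i := by
      rw [hsplit_sum, hsplit_sum, hinit_sum, hIoc_eq]
    have havg : avgSeq a n = avgSeq b n := by rw [avgSeq, avgSeq, hsum_n]
    -- top parts agree
    have hset : ∀ T : Finset ℕ, T ⊆ Finset.Icc 1 k →
        Finset.Icc 1 n \ T = (Finset.Icc 1 k \ T) ∪ Finset.Ioc k n := by
      intro T hT
      ext i
      simp only [Finset.mem_sdiff, Finset.mem_union, Finset.mem_Icc, Finset.mem_Ioc]
      constructor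
      · rintro ⟨⟨h1, h2⟩, h3⟩
        by_cases hik : i ≤ k
        · exact Or.inl ⟨⟨h1, hik⟩, h3⟩
        · exact Or.inr ⟨by omega, h2⟩
      · rintro (⟨⟨h1, h2⟩, h3⟩ | ⟨h1, h2⟩)
        · exact ⟨⟨h1, h2.trans hn⟩, h3⟩
        · refine ⟨⟨by omega, h2⟩, fun hmem => ?_⟩
          have h4 := hT hmem
          rw [Finset.mem_Icc] at h4
          omega
    have hdom_a : ∀ t ∈ Ta, ∀ i ∈ Finset.Icc 1 n \ Ta, a i ≤ a t := by
      intro t ht i hi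
      rw [hset Ta hTa_sub, Finset.mem_union] at hi
      rcases hi with h | h
      · exact hTa_dom t ht i h
      · rw [Finset.mem_Ioc] at h
        have h1 : a i = b i := hih i h.1 h.2
        have h2 : b i ≤ ordStat a k m := hbd i h.1
        have h3 := hal_a t ht
        linarith
    have hdom_b : ∀ t ∈ Tb, ∀ i ∈ Finset.Icc 1 n \ Tb, b i ≤ b t := by
      intro t ht i hi
      rw [hset Tb hTb_sub, Finset.mem_union] at hi
      rcases hi with h | h
      · exact hTb_dom t ht i h
      · rw [Finset.mem_Ioc] at h
        have h2 : b i ≤ ordStat a k m := hbd i h.1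
        have h3 := hal_b t ht
        linarith
    have hIccsub : Finset.Icc 1 k ⊆ Finset.Icc 1 n := Finset.Icc_subset_Icc le_rfl hn
    have hsa := tsF_split a (hTa_sub.trans hIccsub) (j := d n)
      (by rw [hTa_card]; exact hdn1) (by rw [hIcc_card]; exact hdn2) hdom_a
    have hsb := tsF_split b (hTb_sub.trans hIccsub) (j := d n)
      (by rw [hTb_card]; exact hdn1) (by rw [hIcc_card]; exact hdn2) hdom_b
    rw [hTa_card, hset Ta hTa_sub] at hsa
    rw [hTb_card, hset Tb hTb_sub] at hsb
    -- compare the residual parts via tsF_union_le in both directions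
    have hcard_res : (Finset.Icc 1 k \ Ta).card = k - m := by
      rw [Finset.card_sdiff_of_subset hTa_sub, hIcc_card, hTa_card]
    have hcard_res' : (Finset.Icc 1 k \ Tb).card = k - m := by
      rw [Finset.card_sdiff_of_subset hTb_sub, hIcc_card, hTb_card]
    have hdisj1 : Disjoint (Finset.Icc 1 k \ Ta) (Finset.Ioc k n) := by
      rw [Finset.disjoint_left]
      intro i hi hi'
      rw [Finset.mem_sdiff, Finset.mem_Icc] at hi
      rw [Finset.mem_Ioc] at hi'
      omega
    have hdisj2 : Disjoint (Finset.Icc 1 k \ Tb) (Finset.Ioc k n) := by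
      rw [Finset.disjoint_left]
      intro i hi hi'
      rw [Finset.mem_sdiff, Finset.mem_Icc] at hi
      rw [Finset.mem_Ioc] at hi'
      omega
    have hIoc_card : (Finset.Ioc k n).card = n - k := Nat.card_Ioc k n
    have hagree1 : ∀ i ∈ Finset.Ioc k n, a i = b i := fun i hi =>
      hih i (Finset.mem_Ioc.mp hi).1 (Finset.mem_Ioc.mp hi).2
    have hagree2 : ∀ i ∈ Finset.Ioc k n, b i = a i := fun i hi => (hagree1 i hi).symm
    have hjbound : d n - m ≤ (Finset.Icc 1 k \ Ta).card + (Finset.Ioc k n).card := by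
      rw [hcard_res, hIoc_card]; omega
    have hjbound' : d n - m ≤ (Finset.Icc 1 k \ Tb).card + (Finset.Ioc k n).card := by
      rw [hcard_res', hIoc_card]; omega
    have hle1 : tsF a ((Finset.Icc 1 k \ Ta) ∪ Finset.Ioc k n) (d n - m) ≤
        tsF b ((Finset.Icc 1 k \ Tb) ∪ Finset.Ioc k n) (d n - m) :=
      tsF_union_le b a hdisj1 hdisj2 (by rw [hcard_res, hcard_res'])
        (fun c hc => (hts_small c (by omega)).le) hagree1 hjbound
    have hle2 : tsF b ((Finset.Icc 1 k \ Tb) ∪ Finset.Ioc k n) (d n - m) ≤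
        tsF a ((Finset.Icc 1 k \ Ta) ∪ Finset.Ioc k n) (d n - m) :=
      tsF_union_le a b hdisj2 hdisj1 (by rw [hcard_res, hcard_res'])
        (fun c hc => (hts_small c (by rw [hcard_res'] at hc; omega)).ge) hagree2 hjbound'
    have hres : tsF a ((Finset.Icc 1 k \ Ta) ∪ Finset.Ioc k n) (d n - m) =
        tsF b ((Finset.Icc 1 k \ Tb) ∪ Finset.Ioc k n) (d n - m) := le_antisymm hle1 hle2
    have htop : topSum a n (d n) = topSum b n (d n) := by
      rw [topSum_eq_tsF, topSum_eq_tsF, hsa, hsb, hTab_sum, hres]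
    rw [ha n hn, hb n hn, havg, topAvg, topAvg, htop]
  -- wrap up with induction
  have main : ∀ j : ℕ, ∀ i, k < i → i ≤ k + j → a i = b i := by
    intro j
    induction j with
    | zero => intro i h1 h2; omega
    | succ j ih =>
      intro i h1 h2
      rcases Nat.lt_or_ge i (k + j + 1) with h | h
      · exact ih i h1 (by omega)
      · have hi : i = (k + j) + 1 := by omega
        rw [hi]
        exact key (k + j) (by omega) (fun i' h1' h2' => ih i' h1' h2')
  intro n hn
  exact main (n - k) n hn (by omega)
end

section
/- With $u_n$ and $\Delta_n = n(u_n - \bar u_n)$ as in the recursion $u_{n+1} = \varepsilon_n \bar u_n + (1-\varepsilon_n)u_n + \gamma k/(\delta_n n)$ with $u_1=\dots=u_k=0$: if the sequence $\{\varepsilon_n \delta_n\}_{n \ge k}$ is non-increasing, then $\Delta_n \le \gamma k/(\varepsilon_n \delta_n)$ for all $n \ge k$. -/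
open Finset Filter MeasureTheory

/-- upper bound `Δ n ≤ γ k / (ε n δ n)` when `ε δ` is non-increasing. -/
theorem stmt5 (u : ℕ → ℝ) (ε δ : ℕ → ℝ) (γ : ℝ) (k : ℕ) (hk : 1 ≤ k) (hγ : 0 < γ)
    (hε : ∀ n, ε n ∈ Set.Ioc (0 : ℝ) 1) (hδ : ∀ n, δ n ∈ Set.Ioc (0 : ℝ) 1)
    (hmono : ∀ n, k ≤ n → ε (n + 1) * δ (n + 1) ≤ ε n * δ n)
    (hinit : ∀ j, j ≤ k → u j = 0)
    (hrec : ∀ n, k ≤ n →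
      u (n + 1) = ε n * avgSeq u n + (1 - ε n) * u n + γ * k / (δ n * n)) :
    ∀ n, k ≤ n → (n : ℝ) * (u n - avgSeq u n) ≤ γ * k / (ε n * δ n) := by
  intro n hn
  induction n, hn using Nat.le_induction with
  | base =>
    have havg : avgSeq u k = 0 := by
      unfold avgSeq
      rw [Finset.sum_eq_zero fun j hj => hinit j (Finset.mem_Icc.mp hj).2]
      simp
    rw [havg, hinit k le_rfl]
    have hε' := hε k; have hδ' := hδ k
    have : 0 < γ * k / (ε k * δ k) := by
      apply div_pos (by positivity) (mul_pos hε'.1 hδ'.1)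
    simpa using this.le
  | succ n hn ih =>
    have hεn := hε n; have hδn := hδ n
    have hεn1 := hε (n + 1); have hδn1 := hδ (n + 1)
    have hn0 : (0 : ℝ) < n := by
      exact_mod_cast lt_of_lt_of_le hk hn
    have hn0' : (n : ℝ) ≠ 0 := ne_of_gt hn0
    -- key identity
    have key : ((n : ℝ) + 1) * (u (n + 1) - avgSeq u (n + 1)) =
        (1 - ε n) * ((n : ℝ) * (u n - avgSeq u n)) + γ * k / δ n := by
      have hsum : ∑ j ∈ Finset.Icc 1 (n + 1), u j =
          (∑ j ∈ Finset.Icc 1 n, u j) + u (n + 1) := by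
        rw [Finset.sum_Icc_succ_top (by omega)]
      unfold avgSeq
      rw [hsum, hrec n hn]
      unfold avgSeq
      have hδ0 : (δ n : ℝ) ≠ 0 := ne_of_gt hδn.1
      push_cast
      field_simp
      ring
    have key' : ((n : ℝ) + 1) * (u (n + 1) - avgSeq u (n + 1)) ≤ γ * k / (ε n * δ n) := by
      rw [key]
      have h1 : (1 - ε n) * ((n : ℝ) * (u n - avgSeq u n)) ≤
          (1 - ε n) * (γ * k / (ε n * δ n)) :=
        mul_le_mul_of_nonneg_left ih (by linarith [hεn.2])
      have h2 : (1 - ε n) * (γ * k / (ε n * δ n)) + γ * k / δ n = γ * k / (ε n * δ n) := by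
        have hε0 : ε n ≠ 0 := ne_of_gt hεn.1
        have hδ0 : δ n ≠ 0 := ne_of_gt hδn.1
        field_simp
        ring
      linarith
    have hle : γ * k / (ε n * δ n) ≤ γ * k / (ε (n + 1) * δ (n + 1)) := by
      apply div_le_div_of_nonneg_left (by positivity)
        (mul_pos hεn1.1 hδn1.1) (hmono n hn)
    push_cast
    calc ((n : ℝ) + 1) * (u (n + 1) - avgSeq u (n + 1)) ≤ γ * k / (ε n * δ n) := key'
      _ ≤ _ := hle
end

section
/- In the setting of the previous construction ($a_1,\dots,a_{\gamma k}=1$, the rest $0$, and $a_{n+1} \ge \varepsilon\bar a_n + (1-\varepsilon)$ for $k \le n \le 2n_0$ where $n_0 = \gamma k/(4\delta)$), writing $\bar a_n = 1 - d_n$, one has $d_{n+1} \le d_n(1 - (1-\varepsilon)/(n+1))$ for $k \le n \le 2n_0$, and hence $d_n \le ((k+1)/(n+1))^{1-\varepsilon}$ for $k \le n \le 2n_0$. -/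
open Finset Filter MeasureTheory

/-- decay of `d n = 1 - ū n` in the divergence construction. -/
theorem stmt8 (a : ℕ → ℝ) (ε δ γ : ℝ) (k g : ℕ)
    (hε : ε ∈ Set.Ioc (0 : ℝ) (1 / 2)) (hδ : 0 < δ) (hγ : 0 < γ)
    (hg : (g : ℝ) = γ * k) (hg1 : 1 ≤ g) (hgk : g ≤ k)
    (hinit1 : ∀ j, 1 ≤ j → j ≤ g → a j = 1)
    (hinit0 : ∀ j, g < j → j ≤ k → a j = 0)
    (hbdd : ∀ n, a n ∈ Set.Icc (0 : ℝ) 1)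
    (hrec : ∀ n : ℕ, k ≤ n → (n : ℝ) ≤ 2 * (γ * k / (4 * δ)) →
      ε * avgSeq a n + (1 - ε) ≤ a (n + 1)) :
    (∀ n : ℕ, k ≤ n → (n : ℝ) ≤ 2 * (γ * k / (4 * δ)) →
      1 - avgSeq a (n + 1) ≤ (1 - avgSeq a n) * (1 - (1 - ε) / ((n : ℝ) + 1))) ∧
    (∀ n : ℕ, k ≤ n → (n : ℝ) ≤ 2 * (γ * k / (4 * δ)) →
      1 - avgSeq a n ≤ (((k : ℝ) + 1) / ((n : ℝ) + 1)) ^ (1 - ε)) := by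
  obtain ⟨hε0, hε1⟩ := hε
  have hk1 : 1 ≤ k := le_trans hg1 hgk
  have part1 : ∀ n : ℕ, k ≤ n → (n : ℝ) ≤ 2 * (γ * k / (4 * δ)) →
      1 - avgSeq a (n + 1) ≤ (1 - avgSeq a n) * (1 - (1 - ε) / ((n : ℝ) + 1)) := by
    intro n hn hn2
    have hn1 : 1 ≤ n := le_trans hk1 hn
    have hn0 : ((n : ℝ)) ≠ 0 := Nat.cast_ne_zero.mpr (by omega)
    have h1 : (0:ℝ) < (n:ℝ) + 1 := by positivity
    have ha := hrec n hn hn2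
    have hsum : ∑ j ∈ Finset.Icc 1 (n+1), a j = (∑ j ∈ Finset.Icc 1 n, a j) + a (n+1) :=
      Finset.sum_Icc_succ_top (by omega) a
    have hu : avgSeq a (n+1) = ((n:ℝ) * avgSeq a n + a (n+1)) / ((n:ℝ)+1) := by
      unfold avgSeq
      rw [hsum]
      push_cast
      field_simp
    set u := avgSeq a n with hudef
    rw [hu]
    rw [show (1:ℝ) - ((n:ℝ) * u + a (n+1)) / ((n:ℝ)+1)
        = (((n:ℝ)+1) - ((n:ℝ) * u + a (n+1))) / ((n:ℝ)+1) by field_simp]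
    rw [div_le_iff₀ h1]
    have hfe2 : (1 - (1 - ε) / ((n:ℝ)+1)) * ((n:ℝ)+1) = (n:ℝ) + ε := by
      field_simp
      ring
    have hfe : (1 - u) * (1 - (1 - ε) / ((n:ℝ)+1)) * ((n:ℝ)+1) = (1 - u) * ((n:ℝ) + ε) := by
      rw [mul_assoc, hfe2]
    rw [hfe]
    nlinarith [ha]
  refine ⟨part1, ?_⟩
  intro n hn
  induction n, hn using Nat.le_induction with
  | base =>
    intro _
    have hkpos : (0:ℝ) < (k:ℝ) := by exact_mod_cast hk1
    have havg : 0 ≤ avgSeq a k := by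
      unfold avgSeq
      exact div_nonneg (Finset.sum_nonneg fun i _ => (hbdd i).1) (le_of_lt hkpos)
    rw [div_self (by positivity : ((k:ℝ)+1) ≠ 0), Real.one_rpow]
    linarith
  | succ n hkn ih =>
    intro hle
    have hnle : (n : ℝ) ≤ 2 * (γ * k / (4 * δ)) := by push_cast at hle ⊢; linarith
    have ihv := ih hnle
    have h1 := part1 n hkn hnle
    have h1pos : (0:ℝ) < (n:ℝ) + 1 := by positivity
    have h2pos : (0:ℝ) < (n:ℝ) + 2 := by positivity
    have hfnn : 0 ≤ 1 - (1 - ε) / ((n:ℝ)+1) := by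
      rw [sub_nonneg]
      rw [div_le_one h1pos]
      have : (0:ℝ) ≤ (n:ℝ) := Nat.cast_nonneg n
      linarith
    have hcnn : (0:ℝ) ≤ (((k : ℝ) + 1) / ((n : ℝ) + 1)) ^ (1 - ε) :=
      Real.rpow_nonneg (by positivity) _
    set x := (1 - ε) / ((n:ℝ)+1) with hxdef
    have hbern : 1 - x ≤ (((n:ℝ)+1) / ((n:ℝ)+2)) ^ (1 - ε) := by
      have hB : (((n:ℝ)+2) / ((n:ℝ)+1)) ^ (1 - ε) ≤ 1 + x := by
        have hber := rpow_one_add_le_one_add_mul_self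
          (s := 1 / ((n:ℝ)+1)) (le_trans (by norm_num : (-1:ℝ) ≤ 0) (by positivity)) (p := 1 - ε) (by linarith) (by linarith)
        calc (((n:ℝ)+2) / ((n:ℝ)+1)) ^ (1 - ε)
            = (1 + 1 / ((n:ℝ)+1)) ^ (1 - ε) := by
              rw [show ((n:ℝ)+2)/((n:ℝ)+1) = 1 + 1/((n:ℝ)+1) by field_simp; ring]
          _ ≤ 1 + (1 - ε) * (1 / ((n:ℝ)+1)) := hber
          _ = 1 + x := by rw [hxdef, mul_one_div]
      have hBpos : (0:ℝ) < (((n:ℝ)+2) / ((n:ℝ)+1)) ^ (1 - ε) :=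
        Real.rpow_pos_of_pos (by positivity) _
      have hinv : (((n:ℝ)+1) / ((n:ℝ)+2)) ^ (1 - ε)
          = ((((n:ℝ)+2) / ((n:ℝ)+1)) ^ (1 - ε))⁻¹ := by
        rw [← Real.inv_rpow (by positivity)]
        congr 1
        field_simp
      rw [hinv, ← one_div, le_div_iff₀ hBpos]
      calc (1 - x) * ((((n:ℝ)+2) / ((n:ℝ)+1)) ^ (1 - ε))
          ≤ (1 - x) * (1 + x) := mul_le_mul_of_nonneg_left hB hfnn
        _ ≤ 1 := by nlinarith [sq_nonneg x]
    have hmul : (((k : ℝ) + 1) / ((n : ℝ) + 1)) ^ (1 - ε)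
        * ((((n:ℝ)+1) / ((n:ℝ)+2)) ^ (1 - ε))
        = (((k : ℝ) + 1) / ((n : ℝ) + 2)) ^ (1 - ε) := by
      rw [← Real.mul_rpow (by positivity) (by positivity)]
      congr 1
      field_simp
    have hcast : (((n+1 : ℕ) : ℝ)) = (n:ℝ) + 1 := by push_cast; ring
    calc 1 - avgSeq a (n+1)
        ≤ (1 - avgSeq a n) * (1 - x) := h1
      _ ≤ (((k : ℝ) + 1) / ((n : ℝ) + 1)) ^ (1 - ε) * (1 - x) :=
          mul_le_mul_of_nonneg_right ihv hfnn
      _ ≤ (((k : ℝ) + 1) / ((n : ℝ) + 1)) ^ (1 - ε)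
            * ((((n:ℝ)+1) / ((n:ℝ)+2)) ^ (1 - ε)) :=
          mul_le_mul_of_nonneg_left hbern hcnn
      _ = (((k : ℝ) + 1) / ((n : ℝ) + 2)) ^ (1 - ε) := hmul
      _ = (((k : ℝ) + 1) / (((n+1 : ℕ) : ℝ) + 1)) ^ (1 - ε) := by rw [hcast]; ring_nf
end

section
/- Divergent contraction series: Let $\alpha, \beta \ge 0$ with $\alpha + \beta/2 \le 1$, and $A,B,c,C > 0$. Define $\Delta_0 = 1$, $n_0 = k$, and recursively $n_{T+1} = n_T \cdot C/(\varepsilon_{n_{T+1}}^2 \delta_{n_{T+1}}^3 \Delta_T^2)$ (well-defined since $m\varepsilon_m^2\delta_m^3$ is eventually increasing), $\Delta_{T+1} = \Delta_T(1 - c\,\varepsilon_{n_{T+1}}\delta_{n_{T+1}}^{1/2})$, where $\varepsilon_n = A(\log n)^{-\alpha}$, $\delta_n = B(\log n)^{-\beta}$. Then $\Delta_T \to 0$ as $T \to \infty$. -/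
open Filter

/-- The envelope floor `ε_x = A (log x)^{-α}`. -/
noncomputable def envEps (A α x : ℝ) : ℝ := A * Real.log x ^ (-α)

/-- The envelope parameter `δ_x = B (log x)^{-β}`. -/
noncomputable def envDelta (B β x : ℝ) : ℝ := B * Real.log x ^ (-β)



lemma absorb {l R v : ℝ} (hl : 0 < l) (hR : 0 ≤ R) (hv : 0 < v) (hv2 : v ≤ 1/2)
    (h : l ≤ R + v*l) : l ≤ (1+2*v)*R := by
  nlinarith [mul_le_mul_of_nonneg_left h (by linarith : (0:ℝ) ≤ 1+2*v),
    mul_nonneg (mul_nonneg hv.le hl.le) (by linarith : (0:ℝ) ≤ 1 - 2*v)]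

lemma implicit_log_bound {γ l p a t : ℝ} (hγ : 0 ≤ γ) (hl : 0 < l) (hp : 0 < p)
    (ht : 2 ≤ t) (h : l ≤ p + a + γ * Real.log l) :
    l ≤ (1 + 2/t^2) * (p + (max a 0 + γ * Real.log ((γ+1) * t^2))) := by
  have hD : (0:ℝ) < (γ+1) * t^2 := by nlinarith
  have hD1 : (1:ℝ) ≤ (γ+1) * t^2 := by nlinarith
  have hθ : (0:ℝ) < 1/((γ+1)*t^2) := by positivity
  have hlog1 : Real.log ((1/((γ+1)*t^2)) * l) ≤ (1/((γ+1)*t^2)) * l - 1 :=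
    Real.log_le_sub_one_of_pos (mul_pos hθ hl)
  have hlog2 : Real.log ((1/((γ+1)*t^2)) * l) = -Real.log ((γ+1)*t^2) + Real.log l := by
    rw [Real.log_mul hθ.ne' hl.ne', one_div, Real.log_inv]
  have hlogb : Real.log l ≤ (1/((γ+1)*t^2)) * l - 1 + Real.log ((γ+1)*t^2) := by
    rw [hlog2] at hlog1; linarith
  have h2 : γ * Real.log l ≤ γ * ((1/((γ+1)*t^2)) * l + Real.log ((γ+1)*t^2)) := by
    apply mul_le_mul_of_nonneg_left _ hγ
    linarith
  have hγθ : γ * (1/((γ+1)*t^2)) * l ≤ (1/t^2) * l := by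
    apply mul_le_mul_of_nonneg_right _ hl.le
    · rw [mul_one_div, div_le_div_iff₀ hD (by nlinarith)]
      nlinarith
  have hlD : 0 ≤ Real.log ((γ+1)*t^2) := Real.log_nonneg hD1
  have h3 : l ≤ (p + (max a 0 + γ * Real.log ((γ+1)*t^2))) + (1/t^2) * l := by
    have hba : a ≤ max a 0 := le_max_left a 0
    nlinarith
  have hv0 : (0:ℝ) < 1/t^2 := by positivity
  have hv2 : (1:ℝ)/t^2 ≤ 1/2 := by
    rw [div_le_div_iff₀ (by nlinarith) (by norm_num)]; nlinarith
  have hR : 0 ≤ p + (max a 0 + γ * Real.log ((γ+1)*t^2)) :=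
    by have := le_max_right a 0; nlinarith [mul_nonneg hγ hlD]
  have h5 : l ≤ (1+2*(1/t^2)) * (p + (max a 0 + γ * Real.log ((γ+1) * t^2))) := by
    apply absorb hl hR hv0 hv2
    linarith [h3]
  have : (1:ℝ)+2*(1/t^2) = 1 + 2/t^2 := by ring
  linarith [this ▸ h5]


lemma loglog_step {x : ℝ} (hx : 2 ≤ x) :
    Real.log (Real.log (x+1)) - Real.log (Real.log x) ≤ 1 / (x * Real.log x) := by
  have h0 : 0 < Real.log x := Real.log_pos (by linarith)
  have h1 : 0 < Real.log (x+1) := Real.log_pos (by linarith)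
  have hxx : (0:ℝ) < x := by linarith
  rw [← Real.log_div h1.ne' h0.ne']
  have h2 : Real.log (Real.log (x+1) / Real.log x) ≤ Real.log (x+1)/Real.log x - 1 :=
    Real.log_le_sub_one_of_pos (by positivity)
  have h3 : Real.log (x+1) - Real.log x = Real.log ((x+1)/x) :=
    (Real.log_div (by linarith) hxx.ne').symm
  have h4 : Real.log ((x+1)/x) ≤ (x+1)/x - 1 := Real.log_le_sub_one_of_pos (by positivity)
  have h5 : Real.log (x+1) - Real.log x ≤ 1/x := by
    have he : (x+1)/x - 1 = 1/x := by field_simp; ring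
    rw [h3]; linarith [he ▸ h4]
  have h6 : Real.log (x+1)/Real.log x - 1 = (Real.log (x+1) - Real.log x)/Real.log x := by
    field_simp
  rw [h6] at h2
  have h7 : (Real.log (x+1) - Real.log x)/Real.log x ≤ (1/x)/Real.log x :=
    div_le_div_of_nonneg_right h5 h0.le
  have h8 : (1/x)/Real.log x = 1/(x * Real.log x) := by field_simp
  linarith [h8 ▸ h7]

lemma Mbound_arith {E l0 q γ t lg l2 : ℝ} (hE : 0 < E) (hl0 : 0 < l0) (hq : 0 ≤ q)
    (hγ : 0 ≤ γ) (ht : 0 ≤ t) (hlg : l2 ≤ lg) (hl2 : 1/2 < l2) :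
    E * (l0 + (t+1)*(q*l2 + 2*γ*lg)) ≤ (E*(l0 + q + 2*γ) + 1) * ((t+2)*lg) := by
  have hlg0 : 0 < lg := by linarith
  have h1 : (1:ℝ) ≤ (t+2)*lg := by nlinarith
  have h2 : 0 ≤ (t+2)*lg - (t+1)*l2 := by nlinarith
  nlinarith [mul_nonneg (mul_nonneg hE.le hl0.le) (by linarith : (0:ℝ) ≤ (t+2)*lg - 1),
    mul_nonneg (mul_nonneg hE.le hq) h2,
    mul_nonneg (mul_nonneg hE.le hγ) hlg0.le]

set_option maxHeartbeats 2000000 in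
/-- divergent contraction series, `Δ_T → 0` when `α + β/2 ≤ 1`. -/
theorem stmt10 (A B c C α β k : ℝ) (hA : 0 < A) (hB : 0 < B) (hc : 0 < c) (hC : 0 < C)
    (hα : 0 ≤ α) (hβ : 0 ≤ β) (hαβ : α + β / 2 ≤ 1)
    (n Δ : ℕ → ℝ) (hn0 : n 0 = k) (hΔ0 : Δ 0 = 1) (hn1 : ∀ T, 1 < n T)
    (hnrec : ∀ T, n (T + 1) =
      n T * C / ((envEps A α (n (T + 1))) ^ 2 * (envDelta B β (n (T + 1))) ^ 3 * (Δ T) ^ 2))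
    (hΔrec : ∀ T, Δ (T + 1) =
      Δ T * (1 - c * envEps A α (n (T + 1)) * Real.sqrt (envDelta B β (n (T + 1)))))
    (hlt : ∀ T, c * envEps A α (n (T + 1)) * Real.sqrt (envDelta B β (n (T + 1))) < 1) :
    Tendsto Δ atTop (nhds 0) := by
  set ℓ : ℕ → ℝ := fun T => Real.log (n T) with hℓdef
  have hℓ : ∀ T, 0 < ℓ T := fun T => Real.log_pos (hn1 T)
  set x : ℕ → ℝ := fun T => c * envEps A α (n (T+1)) * Real.sqrt (envDelta B β (n (T+1))) with hxdef
  set s : ℝ := α + β/2 with hsdef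
  have hs0 : 0 ≤ s := by positivity
  -- epsilon/delta positivity
  have hepos : ∀ T, 0 < envEps A α (n (T+1)) := fun T => by
    have := Real.rpow_pos_of_pos (hℓ (T+1)) (-α); exact mul_pos hA this
  have hdpos : ∀ T, 0 < envDelta B β (n (T+1)) := fun T => by
    have := Real.rpow_pos_of_pos (hℓ (T+1)) (-β); exact mul_pos hB this
  -- x formula
  have hx_eq : ∀ T, x T = (c * A * Real.sqrt B) * (ℓ (T+1)) ^ (-s) := by
    intro T
    have hl : (0:ℝ) < Real.log (n (T+1)) := hℓ (T+1)
    have h1 : Real.sqrt (envDelta B β (n (T+1))) = Real.sqrt B * Real.log (n (T+1)) ^ (-β * (1/2:ℝ)) := by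
      rw [envDelta, Real.sqrt_mul hB.le, Real.rpow_mul hl.le]
      congr 1
      exact Real.sqrt_eq_rpow _
    show c * envEps A α (n (T+1)) * Real.sqrt (envDelta B β (n (T+1)))
        = (c * A * Real.sqrt B) * Real.log (n (T+1)) ^ (-s)
    rw [h1, envEps]
    have h2 : Real.log (n (T+1)) ^ (-α) * Real.log (n (T+1)) ^ (-β * (1/2:ℝ))
        = Real.log (n (T+1)) ^ (-s) := by
      rw [← Real.rpow_add hl]; congr 1; rw [hsdef]; ring
    calc c * (A * Real.log (n (T+1)) ^ (-α)) * (Real.sqrt B * Real.log (n (T+1)) ^ (-β * (1/2:ℝ)))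
        = (c * A * Real.sqrt B) * (Real.log (n (T+1)) ^ (-α) * Real.log (n (T+1)) ^ (-β * (1/2:ℝ))) := by
          ring
      _ = _ := by rw [h2]
  have hxpos : ∀ T, 0 < x T := fun T =>
    mul_pos (mul_pos hc (hepos T)) (Real.sqrt_pos.mpr (hdpos T))
  have hxlt : ∀ T, x T < 1 := hlt
  have hΔrecx : ∀ T, Δ (T + 1) = Δ T * (1 - x T) := hΔrec
  -- Δ positivity and product bound
  have hΔpos : ∀ T, 0 < Δ T := by
    intro T; induction T with
    | zero => rw [hΔ0]; norm_num
    | succ T ih => rw [hΔrecx T]; exact mul_pos ih (by linarith [hxlt T])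
  have hΔexp : ∀ T, Δ T ≤ Real.exp (-(∑ t ∈ Finset.range T, x t)) := by
    intro T; induction T with
    | zero => simp [hΔ0]
    | succ T ih =>
      rw [hΔrecx T, Finset.sum_range_succ]
      have h1 : (1 : ℝ) - x T ≤ Real.exp (-(x T)) := by
        have := Real.add_one_le_exp (-(x T)); linarith
      calc Δ T * (1 - x T) ≤ Real.exp (-(∑ t ∈ Finset.range T, x t)) * Real.exp (-(x T)) := by
            apply mul_le_mul ih h1 (by linarith [hxlt T]) (Real.exp_nonneg _)
        _ = Real.exp (-(∑ t ∈ Finset.range T, x t + x T)) := by rw [← Real.exp_add]; congr 1; ring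
  -- convergence to the infimum
  have hanti : Antitone Δ := antitone_nat_of_succ_le (fun T => by
    rw [hΔrecx T]
    nlinarith [hΔpos T, hxpos T, hxlt T])
  have hbdd : BddBelow (Set.range Δ) := ⟨0, fun y ⟨T, hT⟩ => hT ▸ (hΔpos T).le⟩
  have htend : Tendsto Δ atTop (nhds (⨅ T, Δ T)) := tendsto_atTop_ciInf hanti hbdd
  set L : ℝ := ⨅ T, Δ T with hLdef
  have hL0 : 0 ≤ L := le_ciInf (fun T => (hΔpos T).le)
  rcases eq_or_lt_of_le hL0 with hL | hL
  · exact hL ▸ htend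
  exfalso
  have hLle : ∀ T, L ≤ Δ T := fun T => ciInf_le hbdd T
  -- log recursion
  set γ : ℝ := 2*α + 3*β with hγdef
  have hγ0 : 0 ≤ γ := by positivity
  have hℓrec : ∀ T, ℓ (T+1) = ℓ T + Real.log C + γ * Real.log (ℓ (T+1))
      - 2*Real.log A - 3*Real.log B - 2*Real.log (Δ T) := by
    intro T
    have hl : (0:ℝ) < Real.log (n (T+1)) := hℓ (T+1)
    have hnT : (0:ℝ) < n T := lt_trans one_pos (hn1 T)
    have he := hepos T
    have hd := hdpos T
    have hΔT := hΔpos T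
    have hE : Real.log (envEps A α (n (T+1))) = Real.log A + (-α) * Real.log (Real.log (n (T+1))) := by
      rw [envEps, Real.log_mul hA.ne' (Real.rpow_pos_of_pos hl (-α)).ne', Real.log_rpow hl]
    have hD : Real.log (envDelta B β (n (T+1))) = Real.log B + (-β) * Real.log (Real.log (n (T+1))) := by
      rw [envDelta, Real.log_mul hB.ne' (Real.rpow_pos_of_pos hl (-β)).ne', Real.log_rpow hl]
    have hprod : Real.log (envEps A α (n (T+1)) ^ 2 * envDelta B β (n (T+1)) ^ 3 * Δ T ^ 2)
        = 2*Real.log (envEps A α (n (T+1))) + 3*Real.log (envDelta B β (n (T+1)))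
          + 2*Real.log (Δ T) := by
      rw [Real.log_mul (mul_ne_zero (pow_ne_zero _ he.ne') (pow_ne_zero _ hd.ne'))
          (pow_ne_zero _ hΔT.ne'),
        Real.log_mul (pow_ne_zero _ he.ne') (pow_ne_zero _ hd.ne'),
        Real.log_pow, Real.log_pow, Real.log_pow]
      push_cast; ring
    have key := congrArg Real.log (hnrec T)
    rw [Real.log_div (mul_ne_zero hnT.ne' hC.ne')
        (by positivity), Real.log_mul hnT.ne' hC.ne', hprod, hE, hD] at key
    show Real.log (n (T+1)) = Real.log (n T) + Real.log C + γ * Real.log (Real.log (n (T+1)))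
      - 2*Real.log A - 3*Real.log B - 2*Real.log (Δ T)
    rw [hγdef]
    linarith [key]
  set a : ℝ := Real.log C - 2*Real.log A - 3*Real.log B - 2*Real.log L with hadef
  have hstep : ∀ T, ℓ (T+1) ≤ ℓ T + a + γ * Real.log (ℓ (T+1)) := by
    intro T
    have := hℓrec T
    have hlog : Real.log L ≤ Real.log (Δ T) := Real.log_le_log hL (hLle T)
    linarith
  -- b and the product-absorbed bound
  set b : ℕ → ℝ := fun T => max a 0 + γ * Real.log ((γ+1) * ((T:ℝ)+2)^2) with hbdefn
  have hb0 : ∀ T, 0 ≤ b T := by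
    intro T
    have hT0 : (0:ℝ) ≤ (T:ℝ) := Nat.cast_nonneg T
    have h1 : (1:ℝ) ≤ (γ+1) * ((T:ℝ)+2)^2 := by nlinarith
    exact add_nonneg (le_max_right a 0) (mul_nonneg hγ0 (Real.log_nonneg h1))
  have hbmono : Monotone b := by
    intro i j hij
    have hi0 : (0:ℝ) ≤ (i:ℝ) := Nat.cast_nonneg i
    have hij' : ((i:ℝ)) ≤ (j:ℝ) := Nat.cast_le.mpr hij
    have h0 : ((i:ℝ)+2)^2 ≤ ((j:ℝ)+2)^2 := by nlinarith
    have h1 : (γ+1) * ((i:ℝ)+2)^2 ≤ (γ+1) * ((j:ℝ)+2)^2 :=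
      mul_le_mul_of_nonneg_left h0 (by linarith : (0:ℝ) ≤ γ+1)
    have hpos : (0:ℝ) < (γ+1) * ((i:ℝ)+2)^2 :=
      mul_pos (by linarith : (0:ℝ) < γ+1) (by positivity)
    have h2 : Real.log ((γ+1) * ((i:ℝ)+2)^2) ≤ Real.log ((γ+1)*((j:ℝ)+2)^2) :=
      Real.log_le_log hpos h1
    exact add_le_add_right (mul_le_mul_of_nonneg_left h2 hγ0) _
  have hstep2 : ∀ T, ℓ (T+1) ≤ (1 + 2/(((T:ℝ)+2)^2)) * (ℓ T + b T) := by
    intro T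
    have hT0 : (0:ℝ) ≤ (T:ℝ) := Nat.cast_nonneg T
    have ht : (2:ℝ) ≤ (T:ℝ)+2 := by linarith
    have h := implicit_log_bound hγ0 (hℓ (T+1)) (hℓ T) ht (hstep T)
    rw [hbdefn]
    exact h
  -- main induction
  set f : ℕ → ℝ := fun T => ℓ 0 + ∑ t ∈ Finset.range T, b t with hfdef
  have hf0 : ∀ T, 0 < f T := by
    intro T
    have : 0 ≤ ∑ t ∈ Finset.range T, b t := Finset.sum_nonneg (fun t _ => hb0 t)
    have := hℓ 0; simp only [hfdef]; linarith
  have hmain : ∀ T, ℓ T ≤ Real.exp (2 - 2/((T:ℝ)+1)) * f T := by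
    intro T
    induction T with
    | zero =>
      have : f 0 = ℓ 0 := by simp [hfdef]
      rw [this]
      norm_num
    | succ T ih =>
      have hT0 : (0:ℝ) ≤ (T:ℝ) := Nat.cast_nonneg T
      have hv0 : (0:ℝ) < 2/(((T:ℝ)+2)^2) := by positivity
      have hcT : (0:ℝ) ≤ 2 - 2/((T:ℝ)+1) := by
        rw [sub_nonneg, div_le_iff₀ (by linarith)]; linarith
      have hexp1 : (1:ℝ) ≤ Real.exp (2 - 2/((T:ℝ)+1)) := by
        have := Real.add_one_le_exp (2 - 2/((T:ℝ)+1)); linarith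
      have hfT : 0 < f T := hf0 T
      have hfT1 : f (T+1) = f T + b T := by
        rw [hfdef]; simp [Finset.sum_range_succ]; ring
      have step1 : ℓ (T+1) ≤ (1+2/(((T:ℝ)+2)^2)) * (ℓ T + b T) := by
        have := hstep2 T; linarith
      have step2 : ℓ T + b T ≤ Real.exp (2 - 2/((T:ℝ)+1)) * f T + b T := by linarith [ih]
      have step3 : Real.exp (2 - 2/((T:ℝ)+1)) * f T + b T
          ≤ Real.exp (2 - 2/((T:ℝ)+1)) * (f T + b T) := by
        nlinarith [mul_nonneg (by linarith : (0:ℝ) ≤ Real.exp (2 - 2/((T:ℝ)+1)) - 1) (hb0 T)]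
      have step4 : (1+2/(((T:ℝ)+2)^2)) ≤ Real.exp (2/(((T:ℝ)+1)*((T:ℝ)+2))) := by
        have h1 : 2/(((T:ℝ)+2)^2) ≤ 2/(((T:ℝ)+1)*((T:ℝ)+2)) := by
          rw [div_le_div_iff₀ (by nlinarith) (by nlinarith)]
          nlinarith
        have h2 : (1:ℝ) + 2/(((T:ℝ)+2)^2) ≤ Real.exp (2/(((T:ℝ)+2)^2)) := by
          have := Real.add_one_le_exp (2/(((T:ℝ)+2)^2)); linarith
        exact le_trans h2 (Real.exp_le_exp.mpr h1)
      have hee : Real.exp (2/(((T:ℝ)+1)*((T:ℝ)+2))) * Real.exp (2 - 2/((T:ℝ)+1))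
          = Real.exp (2 - 2/((↑(T+1):ℝ)+1)) := by
        rw [← Real.exp_add]
        congr 1
        push_cast
        have h1 : ((T:ℝ)+1) ≠ 0 := by linarith
        have h2 : ((T:ℝ)+2) ≠ 0 := by linarith
        field_simp
        ring
      calc ℓ (T+1) ≤ (1+2/(((T:ℝ)+2)^2)) * (ℓ T + b T) := step1
        _ ≤ (1+2/(((T:ℝ)+2)^2)) * (Real.exp (2 - 2/((T:ℝ)+1)) * (f T + b T)) := by
            have h5 : ℓ T + b T ≤ Real.exp (2 - 2/((T:ℝ)+1)) * (f T + b T) := le_trans step2 step3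
            exact mul_le_mul_of_nonneg_left h5 (by linarith)
        _ ≤ Real.exp (2/(((T:ℝ)+1)*((T:ℝ)+2))) * (Real.exp (2 - 2/((T:ℝ)+1)) * (f T + b T)) := by
            apply mul_le_mul_of_nonneg_right step4
            have := hb0 T
            positivity
        _ = Real.exp (2 - 2/((↑(T+1):ℝ)+1)) * (f T + b T) := by rw [← mul_assoc, hee]
        _ = Real.exp (2 - 2/((↑(T+1):ℝ)+1)) * f (T+1) := by rw [hfT1]
  -- the M bound
  obtain ⟨M, hM1, hMbound⟩ : ∃ M : ℝ, 1 ≤ M ∧ ∀ T : ℕ, ℓ (T+1) ≤ M * (((T:ℝ)+2) * Real.log ((T:ℝ)+2)) := by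
    have hlog2 : (1/2:ℝ) < Real.log 2 := by
      have := Real.log_two_gt_d9; linarith
    have ha2 : 0 ≤ max a 0 + γ * Real.log (γ+1) :=
      add_nonneg (le_max_right a 0) (mul_nonneg hγ0 (Real.log_nonneg (by linarith)))
    have hq0 : 0 ≤ (max a 0 + γ * Real.log (γ+1))/Real.log 2 := div_nonneg ha2 (by linarith)
    refine ⟨Real.exp 2 * (ℓ 0 + (max a 0 + γ * Real.log (γ+1))/Real.log 2 + 2*γ) + 1, ?_, ?_⟩
    · nlinarith [Real.exp_pos 2, hℓ 0, hγ0, hq0]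
    · intro T
      have hT0 : (0:ℝ) ≤ (T:ℝ) := Nat.cast_nonneg T
      have h1 := hmain (T+1)
      have hle2 : Real.exp (2 - 2/((↑(T+1):ℝ)+1)) ≤ Real.exp 2 := by
        apply Real.exp_le_exp.mpr
        have hp : (0:ℝ) < (↑(T+1):ℝ)+1 := by push_cast; linarith
        have : 0 ≤ 2/((↑(T+1):ℝ)+1) := by positivity
        linarith
      have hfpos := (hf0 (T+1)).le
      have h2 : ℓ (T+1) ≤ Real.exp 2 * f (T+1) :=
        le_trans h1 (mul_le_mul_of_nonneg_right hle2 hfpos)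
      have hsum : ∑ t ∈ Finset.range (T+1), b t ≤ ((T:ℝ)+1) * b T := by
        have hc := Finset.sum_le_card_nsmul (Finset.range (T+1)) b (b T)
          (fun t ht => hbmono (Nat.le_of_lt_succ (Finset.mem_range.mp ht)))
        rw [Finset.card_range, nsmul_eq_mul] at hc
        push_cast at hc
        linarith [hc]
      have hf1 : f (T+1) ≤ ℓ 0 + ((T:ℝ)+1) * b T := by
        have : f (T+1) = ℓ 0 + ∑ t ∈ Finset.range (T+1), b t := by rw [hfdef]
        linarith [hsum, this]
      have hbT : b T = ((max a 0 + γ * Real.log (γ+1))/Real.log 2) * Real.log 2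
          + 2*γ*Real.log ((T:ℝ)+2) := by
        rw [hbdefn]
        have hg1 : (0:ℝ) < γ + 1 := by linarith
        have hT2 : ((T:ℝ)+2)^2 ≠ 0 := by positivity
        show max a 0 + γ * Real.log ((γ+1) * ((T:ℝ)+2)^2) = _
        rw [Real.log_mul hg1.ne' hT2, Real.log_pow,
          div_mul_cancel₀ _ (by linarith : Real.log 2 ≠ 0)]
        push_cast
        ring
      have hlg : Real.log 2 ≤ Real.log ((T:ℝ)+2) := Real.log_le_log two_pos (by linarith)
      have harith := Mbound_arith (Real.exp_pos 2) (hℓ 0) hq0 hγ0 hT0 hlg hlog2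
      have h3 : Real.exp 2 * f (T+1)
          ≤ Real.exp 2 * (ℓ 0 + ((T:ℝ)+1) * b T) :=
        mul_le_mul_of_nonneg_left hf1 (Real.exp_pos 2).le
      rw [hbT] at h3
      exact le_trans h2 (le_trans h3 harith)
  -- lower bound on x
  set κ : ℝ := c * A * Real.sqrt B with hκdef
  have hκpos : 0 < κ := by
    have := Real.sqrt_pos.mpr hB; positivity
  have hxlow : ∀ T : ℕ, κ / (M * (((T:ℝ)+2) * Real.log ((T:ℝ)+2))) ≤ x T := by
    intro T
    have hT0 : (0:ℝ) ≤ (T:ℝ) := Nat.cast_nonneg T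
    have hlg : Real.log 2 ≤ Real.log ((T:ℝ)+2) := Real.log_le_log two_pos (by linarith)
    have hlog2 : (1/2:ℝ) < Real.log 2 := by have := Real.log_two_gt_d9; linarith
    have hlgpos : (0:ℝ) < Real.log ((T:ℝ)+2) := by linarith
    have hp1 : (1:ℝ) ≤ ((T:ℝ)+2) * Real.log ((T:ℝ)+2) := by
      nlinarith [mul_nonneg hT0 hlgpos.le]
    have hW1 : 1 ≤ M * (((T:ℝ)+2) * Real.log ((T:ℝ)+2)) := by
      nlinarith [mul_nonneg (by linarith : (0:ℝ) ≤ M - 1) (by linarith : (0:ℝ) ≤ ((T:ℝ)+2) * Real.log ((T:ℝ)+2) - 1)]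
    rw [hx_eq T]
    rcases le_or_gt 1 (ℓ (T+1)) with h | h
    · have hs1 : ℓ (T+1) ^ s ≤ M * (((T:ℝ)+2) * Real.log ((T:ℝ)+2)) := by
        calc ℓ (T+1) ^ s ≤ ℓ (T+1) ^ (1:ℝ) := Real.rpow_le_rpow_of_exponent_le h hαβ
          _ = ℓ (T+1) := Real.rpow_one _
          _ ≤ _ := hMbound T
      have hspos : 0 < ℓ (T+1) ^ s := Real.rpow_pos_of_pos (hℓ (T+1)) s
      have hinv : (M * (((T:ℝ)+2) * Real.log ((T:ℝ)+2)))⁻¹ ≤ (ℓ (T+1) ^ s)⁻¹ :=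
        inv_anti₀ hspos hs1
      rw [Real.rpow_neg (hℓ (T+1)).le, div_eq_mul_inv]
      exact mul_le_mul_of_nonneg_left hinv hκpos.le
    · have h1 : (1:ℝ) ≤ ℓ (T+1) ^ (-s) := by
        calc (1:ℝ) = ℓ (T+1) ^ (0:ℝ) := (Real.rpow_zero _).symm
          _ ≤ ℓ (T+1) ^ (-s) :=
            Real.rpow_le_rpow_of_exponent_ge (hℓ (T+1)) h.le (by linarith)
      calc κ / (M * (((T:ℝ)+2) * Real.log ((T:ℝ)+2))) ≤ κ := div_le_self hκpos.le hW1
        _ = κ * 1 := (mul_one κ).symm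
        _ ≤ κ * ℓ (T+1) ^ (-s) := mul_le_mul_of_nonneg_left h1 hκpos.le
  -- telescoping lower bound for the sum
  have hsumlow : ∀ N : ℕ, (κ/M) * (Real.log (Real.log ((N:ℝ)+2)) - Real.log (Real.log 2))
      ≤ ∑ t ∈ Finset.range N, x t := by
    intro N
    have hκM : 0 ≤ κ/M := div_nonneg hκpos.le (by linarith)
    have hpt : ∀ T ∈ Finset.range N,
        (κ/M) * (Real.log (Real.log ((↑(T+1):ℝ)+2)) - Real.log (Real.log ((T:ℝ)+2))) ≤ x T := by
      intro T _
      have hT0 : (0:ℝ) ≤ (T:ℝ) := Nat.cast_nonneg T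
      have h1 := loglog_step (x := (T:ℝ)+2) (by linarith)
      have h2 := hxlow T
      have h3 : (κ/M) * (Real.log (Real.log (((T:ℝ)+2)+1)) - Real.log (Real.log ((T:ℝ)+2)))
          ≤ (κ/M) * (1/(((T:ℝ)+2) * Real.log ((T:ℝ)+2))) := mul_le_mul_of_nonneg_left h1 hκM
      have h4 : (κ/M) * (1/(((T:ℝ)+2) * Real.log ((T:ℝ)+2)))
          = κ/(M*(((T:ℝ)+2) * Real.log ((T:ℝ)+2))) := by
        rw [div_mul_div_comm, mul_one]
      have hcast : ((↑(T+1):ℝ)+2) = ((T:ℝ)+2)+1 := by push_cast; ring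
      rw [hcast]
      rw [h4] at h3
      exact le_trans h3 h2
    have hsum := Finset.sum_le_sum hpt
    have htel : ∑ T ∈ Finset.range N,
        ((κ/M) * (Real.log (Real.log ((↑(T+1):ℝ)+2)) - Real.log (Real.log ((T:ℝ)+2))))
        = (κ/M) * (Real.log (Real.log ((N:ℝ)+2)) - Real.log (Real.log ((↑(0:ℕ):ℝ)+2))) := by
      rw [← Finset.mul_sum]
      congr 1
      exact Finset.sum_range_sub (fun T => Real.log (Real.log ((T:ℝ)+2))) N
    rw [htel] at hsum
    have : ((↑(0:ℕ):ℝ)+2) = 2 := by norm_num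
    rw [this] at hsum
    exact hsum
  -- sum upper bound
  have hsumup : ∀ N : ℕ, ∑ t ∈ Finset.range N, x t ≤ -Real.log L := by
    intro N
    have h1 : L ≤ Real.exp (-(∑ t ∈ Finset.range N, x t)) := le_trans (hLle N) (hΔexp N)
    have h2 : Real.log L ≤ -(∑ t ∈ Finset.range N, x t) := by
      calc Real.log L ≤ Real.log (Real.exp (-(∑ t ∈ Finset.range N, x t))) := Real.log_le_log hL h1
        _ = _ := Real.log_exp _
    linarith
  -- final contradiction
  have hκM0 : 0 < κ/M := div_pos hκpos (by linarith)
  have hgl : Tendsto (fun N : ℕ => Real.log (Real.log ((N:ℝ)+2))) atTop atTop := by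
    apply Real.tendsto_log_atTop.comp
    apply Real.tendsto_log_atTop.comp
    exact tendsto_atTop_add_const_right atTop 2 tendsto_natCast_atTop_atTop
  obtain ⟨N, hN⟩ :=
    (hgl.eventually_gt_atTop ((M/κ) * (-Real.log L) + Real.log (Real.log 2))).exists
  have h1 := hsumlow N
  have h2 := hsumup N
  have h3 : (κ/M) * ((M/κ) * (-Real.log L)) = -Real.log L := by
    have hM0 : M ≠ 0 := by linarith
    have hκ0 : κ ≠ 0 := hκpos.ne'
    field_simp
  have h4 := mul_lt_mul_of_pos_left hN hκM0
  -- h4 : (κ/M) * ((M/κ)*(-log L) + log log 2) < (κ/M) * log log (N+2)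
  linarith [h1, h2, h3, h4]
end

section
/- Convergent contraction series: Let $\alpha, \beta > 0$ with $\alpha + \beta/2 > 1$, $A,B,C > 0$, and $U_0 > 0$. Define $n_{T+1} = n_T/(2\delta_{n_T}^{1/2})$ and $U_{T+1} = U_T(1 - C\varepsilon_{n_T}\delta_{n_T}^{1/2})$ with $\varepsilon_n = A(\log n)^{-\alpha}$, $\delta_n = B(\log n)^{-\beta}$, and $n_0 = k$. If $k$ is sufficiently large, then $U_T$ decreases to a limit $U_\infty > U_0/2$. -/
open Filter

/-- `exp (-(2x)) ≤ 1 - x` for `0 ≤ x ≤ 1/2`. -/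
lemma exp_neg_two_mul_le {x : ℝ} (h0 : 0 ≤ x) (h1 : x ≤ 1 / 2) :
    Real.exp (-(2 * x)) ≤ 1 - x := by
  have h3 : Real.exp (2 * x) * Real.exp (-(2 * x)) = 1 := by
    rw [← Real.exp_add]; ring_nf; exact Real.exp_zero
  nlinarith [Real.add_one_le_exp (2 * x), Real.exp_pos (-(2 * x)), Real.exp_pos (2 * x)]

/-- convergent contraction series, `U_T` decreases to a limit `> U₀ / 2`
when `α + β/2 > 1` and `k` is sufficiently large. -/
theorem stmt11 (A B C α β U₀ : ℝ) (hA : 0 < A) (hB : 0 < B) (hC : 0 < C)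
    (hα : 0 < α) (hβ : 0 < β) (hαβ : 1 < α + β / 2) (hU : 0 < U₀) :
    ∃ k₀ : ℝ, ∀ k : ℝ, k₀ ≤ k → ∀ n U : ℕ → ℝ,
      n 0 = k → U 0 = U₀ →
      (∀ T, n (T + 1) = n T / (2 * Real.sqrt (envDelta B β (n T)))) →
      (∀ T, U (T + 1) = U T * (1 - C * envEps A α (n T) * Real.sqrt (envDelta B β (n T)))) →
      (∀ T₁ T₂, T₁ ≤ T₂ → U T₂ ≤ U T₁) ∧
      ∃ L : ℝ, U₀ / 2 < L ∧ Tendsto U atTop (nhds L) := by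
  obtain ⟨s, hs_def⟩ : ∃ s : ℝ, s = α + β / 2 := ⟨_, rfl⟩
  have hs : 1 < s := by rw [hs_def]; exact hαβ
  obtain ⟨p, hp_def⟩ : ∃ p : ℝ, p = (1 + s) / 2 := ⟨_, rfl⟩
  obtain ⟨q, hq_def⟩ : ∃ q : ℝ, q = (s - 1) / 2 := ⟨_, rfl⟩
  have hp : 1 < p := by rw [hp_def]; linarith
  have hq : 0 < q := by rw [hq_def]; linarith
  have hqp : q + p = s := by rw [hq_def, hp_def]; ring
  -- the comparison series
  have hZsum : Summable (fun t : ℕ => ((t : ℝ) + 1) ^ (-p)) := by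
    have h0 : Summable (fun t : ℕ => ((t : ℝ)) ^ (-p)) :=
      Real.summable_nat_rpow.mpr (by linarith)
    have h1 := (summable_nat_add_iff (f := fun t : ℕ => ((t : ℝ)) ^ (-p)) 1).mpr h0
    refine h1.congr fun t => ?_
    push_cast
    rfl
  obtain ⟨Z, hZ_def⟩ : ∃ Z : ℝ, Z = ∑' t : ℕ, ((t : ℝ) + 1) ^ (-p) := ⟨_, rfl⟩
  have hZnn : ∀ t : ℕ, (0 : ℝ) ≤ ((t : ℝ) + 1) ^ (-p) := fun t =>
    Real.rpow_nonneg (by positivity) _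
  have hZ1 : (1 : ℝ) ≤ Z := by
    have h0 := Summable.le_tsum hZsum 0 (fun t _ => hZnn t)
    rw [hZ_def]
    simpa using h0
  have hZpos : (0:ℝ) < Z := lt_of_lt_of_le one_pos hZ1
  obtain ⟨M, hM_def⟩ : ∃ M : ℝ, M = C * A * Real.sqrt B := ⟨_, rfl⟩
  have hM : 0 < M := by rw [hM_def]; positivity
  have hlog2 : 0 < Real.log 2 := Real.log_pos one_lt_two
  -- choose L₀
  obtain ⟨a₁, ha1_def⟩ : ∃ a₁ : ℝ,
    a₁ = Real.exp ((2 / β) * (1 + Real.log 2 + |Real.log B| / 2)) := ⟨_, rfl⟩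
  obtain ⟨R, hR_def⟩ : ∃ R : ℝ, R = 2 * M * Z / Real.log 2 + 1 := ⟨_, rfl⟩
  have hRpos : 0 < R := by rw [hR_def]; positivity
  obtain ⟨a₂, ha2_def⟩ : ∃ a₂ : ℝ, a₂ = R ^ (1 / q) + 1 := ⟨_, rfl⟩
  obtain ⟨L₀, hL0_def⟩ : ∃ L₀ : ℝ, L₀ = max a₁ a₂ := ⟨_, rfl⟩
  have ha1pos : 0 < a₁ := by rw [ha1_def]; exact Real.exp_pos _
  have hL0a1 : a₁ ≤ L₀ := by rw [hL0_def]; exact le_max_left _ _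
  have hL0a2 : a₂ ≤ L₀ := by rw [hL0_def]; exact le_max_right _ _
  have hL0one : 1 ≤ L₀ := by
    refine le_trans ?_ hL0a1
    rw [ha1_def]
    have h0 : (0:ℝ) ≤ (2 / β) * (1 + Real.log 2 + |Real.log B| / 2) := by positivity
    calc (1:ℝ) = Real.exp 0 := Real.exp_zero.symm
      _ ≤ Real.exp ((2 / β) * (1 + Real.log 2 + |Real.log B| / 2)) := Real.exp_le_exp.mpr h0
  have hL0pos : 0 < L₀ := lt_of_lt_of_le one_pos hL0one
  -- P2: growth gain
  have hP2 : ∀ L : ℝ, L₀ ≤ L → 1 + Real.log 2 + Real.log B / 2 ≤ β / 2 * Real.log L := by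
    intro L hL
    have hLpos : 0 < L := lt_of_lt_of_le hL0pos hL
    have h1 : (2 / β) * (1 + Real.log 2 + |Real.log B| / 2) ≤ Real.log L := by
      calc (2 / β) * (1 + Real.log 2 + |Real.log B| / 2) = Real.log a₁ := by
            rw [ha1_def, Real.log_exp]
        _ ≤ Real.log L := Real.log_le_log ha1pos (le_trans hL0a1 hL)
    have habs : Real.log B ≤ |Real.log B| := le_abs_self _
    have h2 : β / 2 * ((2 / β) * (1 + Real.log 2 + |Real.log B| / 2)) ≤ β / 2 * Real.log L :=
      mul_le_mul_of_nonneg_left h1 (by positivity)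
    have h3 : β / 2 * ((2 / β) * (1 + Real.log 2 + |Real.log B| / 2))
        = 1 + Real.log 2 + |Real.log B| / 2 := by
      field_simp
    linarith
  -- P3: smallness
  have hP3 : M * L₀ ^ (-q) * Z < Real.log 2 / 2 := by
    have ha2' : R ^ (1 / q) ≤ L₀ := by
      refine le_trans ?_ hL0a2
      rw [ha2_def]; linarith
    have hbase : (0:ℝ) ≤ R ^ (1 / q) := Real.rpow_nonneg hRpos.le _
    have hpow : R ≤ L₀ ^ q := by
      have h1 : (R ^ (1 / q)) ^ q ≤ L₀ ^ q := Real.rpow_le_rpow hbase ha2' hq.le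
      rwa [← Real.rpow_mul hRpos.le, one_div, inv_mul_cancel₀ hq.ne', Real.rpow_one] at h1
    have hLq : (0:ℝ) < L₀ ^ q := Real.rpow_pos_of_pos hL0pos _
    have hinvle : (L₀ ^ q)⁻¹ ≤ R⁻¹ := inv_anti₀ hRpos hpow
    have h6 : M * L₀ ^ (-q) * Z ≤ M * R⁻¹ * Z := by
      rw [Real.rpow_neg hL0pos.le]
      have := mul_le_mul_of_nonneg_left hinvle hM.le
      exact mul_le_mul_of_nonneg_right this hZpos.le
    have h7 : M * R⁻¹ * Z < Real.log 2 / 2 := by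
      rw [show M * R⁻¹ * Z = 2 * M * Z / (2 * R) by field_simp,
        div_lt_div_iff₀ (by positivity) two_pos]
      have hcanc : Real.log 2 * (2 * M * Z / Real.log 2) = 2 * M * Z := by
        field_simp
      have hexp : Real.log 2 * (2 * R) = 4 * M * Z + 2 * Real.log 2 := by
        rw [hR_def]; linear_combination 2 * hcanc
      linarith [hexp, hlog2]
    linarith
  refine ⟨Real.exp L₀, fun k hk n U hn0 hU0 hnrec hUrec => ?_⟩
  have hkpos : 0 < k := lt_of_lt_of_le (Real.exp_pos _) hk
  -- key induction: positivity and log lower bound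
  have key : ∀ T : ℕ, 0 < n T ∧ L₀ + T ≤ Real.log (n T) := by
    intro T
    induction T with
    | zero =>
      refine ⟨by rw [hn0]; exact hkpos, ?_⟩
      rw [hn0]
      push_cast
      have := Real.log_le_log (Real.exp_pos L₀) hk
      rw [Real.log_exp] at this
      linarith
    | succ T ih =>
      obtain ⟨hpos, hlog⟩ := ih
      have hTnn : (0:ℝ) ≤ (T : ℝ) := Nat.cast_nonneg T
      have hLL0 : L₀ ≤ Real.log (n T) := by linarith
      have hLpos : 0 < Real.log (n T) := lt_of_lt_of_le hL0pos hLL0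
      have hδpos : 0 < envDelta B β (n T) := by
        rw [envDelta]
        exact mul_pos hB (Real.rpow_pos_of_pos hLpos _)
      have hsd : 0 < Real.sqrt (envDelta B β (n T)) := Real.sqrt_pos.mpr hδpos
      have hn1 : 0 < n (T + 1) := by
        rw [hnrec T]; positivity
      refine ⟨hn1, ?_⟩
      have hlogval : Real.log (n (T + 1)) =
          Real.log (n T) - (Real.log 2 + (Real.log B + (-β) * Real.log (Real.log (n T))) / 2) := by
        rw [hnrec T, Real.log_div hpos.ne' (by positivity),
          Real.log_mul (by norm_num : (2:ℝ) ≠ 0) hsd.ne', Real.log_sqrt hδpos.le,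
          envDelta, Real.log_mul hB.ne' (Real.rpow_pos_of_pos hLpos _).ne',
          Real.log_rpow hLpos]
      have hgain := hP2 (Real.log (n T)) hLL0
      rw [hlogval]
      push_cast
      linarith
  -- the contraction coefficients
  have hcval : ∀ T, C * envEps A α (n T) * Real.sqrt (envDelta B β (n T))
      = M * Real.log (n T) ^ (-s) := by
    intro T
    obtain ⟨hpos, hlog⟩ := key T
    have hTnn : (0:ℝ) ≤ (T : ℝ) := Nat.cast_nonneg T
    have hLpos : 0 < Real.log (n T) := lt_of_lt_of_le hL0pos (by linarith)
    have hsqrt : Real.sqrt (envDelta B β (n T))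
        = Real.sqrt B * Real.log (n T) ^ (-(β / 2)) := by
      rw [envDelta, Real.sqrt_mul hB.le, Real.sqrt_eq_rpow (Real.log (n T) ^ (-β)),
        ← Real.rpow_mul hLpos.le, show -β * (1 / 2 : ℝ) = -(β / 2) by ring]
    rw [envEps, hsqrt, hM_def,
      show -s = -α + -(β / 2) by rw [hs_def]; ring, Real.rpow_add hLpos]
    ring
  set c : ℕ → ℝ := fun T => M * Real.log (n T) ^ (-s) with hc_def
  have hcnonneg : ∀ T, 0 ≤ c T := by
    intro T
    have : (0:ℝ) ≤ Real.log (n T) ^ (-s) := Real.rpow_nonneg (by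
      obtain ⟨_, hlog⟩ := key T
      have hTnn : (0:ℝ) ≤ (T : ℝ) := Nat.cast_nonneg T
      linarith) _
    have := mul_le_mul_of_nonneg_left this hM.le
    simpa [hc_def] using this
  have hcbound : ∀ T : ℕ, c T ≤ M * L₀ ^ (-q) * ((T : ℝ) + 1) ^ (-p) := by
    intro T
    obtain ⟨hpos, hlog⟩ := key T
    have hTnn : (0:ℝ) ≤ (T : ℝ) := Nat.cast_nonneg T
    have hT1 : (0:ℝ) < (T : ℝ) + 1 := by positivity
    have hLT : (0:ℝ) < L₀ + T := by positivity
    have h1 : Real.log (n T) ^ (-s) ≤ (L₀ + T) ^ (-s) :=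
      Real.rpow_le_rpow_of_nonpos hLT hlog (by linarith)
    have h2 : (L₀ + (T:ℝ)) ^ (-s) = (L₀ + T) ^ (-q) * (L₀ + T) ^ (-p) := by
      rw [← Real.rpow_add hLT]
      congr 1
      rw [← hqp]; ring
    have h3 : (L₀ + (T:ℝ)) ^ (-q) ≤ L₀ ^ (-q) :=
      Real.rpow_le_rpow_of_nonpos hL0pos (by linarith) (by linarith)
    have h4 : (L₀ + (T:ℝ)) ^ (-p) ≤ ((T:ℝ) + 1) ^ (-p) :=
      Real.rpow_le_rpow_of_nonpos hT1 (by linarith) (by linarith)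
    have h5 : (L₀ + (T:ℝ)) ^ (-q) * (L₀ + T) ^ (-p) ≤ L₀ ^ (-q) * ((T:ℝ) + 1) ^ (-p) :=
      mul_le_mul h3 h4 (Real.rpow_nonneg hLT.le _) (Real.rpow_nonneg hL0pos.le _)
    calc c T = M * Real.log (n T) ^ (-s) := rfl
      _ ≤ M * ((L₀ + T) ^ (-s)) := mul_le_mul_of_nonneg_left h1 hM.le
      _ = M * ((L₀ + T) ^ (-q) * (L₀ + T) ^ (-p)) := by rw [h2]
      _ ≤ M * (L₀ ^ (-q) * ((T:ℝ) + 1) ^ (-p)) := mul_le_mul_of_nonneg_left h5 hM.le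
      _ = M * L₀ ^ (-q) * ((T:ℝ) + 1) ^ (-p) := by ring
  have hLqnn : (0:ℝ) ≤ L₀ ^ (-q) := Real.rpow_nonneg hL0pos.le _
  have hsumb : ∀ T : ℕ, ∑ t ∈ Finset.range T, c t ≤ M * L₀ ^ (-q) * Z := by
    intro T
    calc ∑ t ∈ Finset.range T, c t
        ≤ ∑ t ∈ Finset.range T, M * L₀ ^ (-q) * ((t : ℝ) + 1) ^ (-p) :=
          Finset.sum_le_sum fun t _ => hcbound t
      _ = M * L₀ ^ (-q) * ∑ t ∈ Finset.range T, ((t : ℝ) + 1) ^ (-p) := by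
          rw [Finset.mul_sum]
      _ ≤ M * L₀ ^ (-q) * Z := by
          refine mul_le_mul_of_nonneg_left ?_ (by positivity)
          rw [hZ_def]
          exact Summable.sum_le_tsum (Finset.range T) (fun t _ => hZnn t) hZsum
  have hchalf : ∀ T, c T ≤ 1 / 2 := by
    intro T
    have hTnn : (0:ℝ) ≤ (T : ℝ) := Nat.cast_nonneg T
    have h1 : ((T:ℝ) + 1) ^ (-p) ≤ 1 :=
      Real.rpow_le_one_of_one_le_of_nonpos (by linarith) (by linarith)
    have h2 : c T ≤ M * L₀ ^ (-q) * 1 := le_trans (hcbound T)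
      (mul_le_mul_of_nonneg_left h1 (by positivity))
    have h3 : M * L₀ ^ (-q) * 1 ≤ M * L₀ ^ (-q) * Z :=
      mul_le_mul_of_nonneg_left hZ1 (by positivity)
    have hl2 : Real.log 2 < 1 := by
      have := Real.log_two_lt_d9
      linarith
    linarith
  -- rewrite the recursion in terms of c
  have hUrec' : ∀ T, U (T + 1) = U T * (1 - c T) := by
    intro T
    rw [hUrec T, hc_def]
    simp only
    rw [hcval T]
  -- positivity and monotonicity of U
  have hUpos : ∀ T, 0 < U T := by
    intro T
    induction T with
    | zero => rw [hU0]; exact hU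
    | succ T ih =>
      rw [hUrec' T]
      have h1 : (0:ℝ) < 1 - c T := by linarith [hchalf T]
      exact mul_pos ih h1
  have hstep : ∀ T, U (T + 1) ≤ U T := by
    intro T
    rw [hUrec' T]
    have h1 : 1 - c T ≤ 1 := by linarith [hcnonneg T]
    calc U T * (1 - c T) ≤ U T * 1 := mul_le_mul_of_nonneg_left h1 (hUpos T).le
      _ = U T := mul_one _
  have hanti : Antitone U := antitone_nat_of_succ_le hstep
  -- lower bound via exp
  have hlb : ∀ T, U₀ * Real.exp (-(2 * ∑ t ∈ Finset.range T, c t)) ≤ U T := by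
    intro T
    induction T with
    | zero => simp [hU0]
    | succ T ih =>
      have hexp : Real.exp (-(2 * c T)) ≤ 1 - c T := exp_neg_two_mul_le (hcnonneg T) (hchalf T)
      have h1 : U₀ * Real.exp (-(2 * ∑ t ∈ Finset.range T, c t)) * Real.exp (-(2 * c T))
          ≤ U T * (1 - c T) :=
        mul_le_mul ih hexp (Real.exp_pos _).le (hUpos T).le
      rw [hUrec' T]
      refine le_trans (le_of_eq ?_) h1
      rw [Finset.sum_range_succ, mul_assoc, ← Real.exp_add]
      congr 2
      ring
  -- uniform lower bound
  obtain ⟨m, hm_def⟩ : ∃ m : ℝ, m = U₀ * Real.exp (-(2 * (M * L₀ ^ (-q) * Z))) := ⟨_, rfl⟩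
  have hmlb : ∀ T, m ≤ U T := by
    intro T
    refine le_trans ?_ (hlb T)
    rw [hm_def]
    refine mul_le_mul_of_nonneg_left ?_ hU.le
    exact Real.exp_le_exp.mpr (by linarith [hsumb T])
  have hmgt : U₀ / 2 < m := by
    rw [hm_def]
    have h1 : Real.exp (-Real.log 2) < Real.exp (-(2 * (M * L₀ ^ (-q) * Z))) :=
      Real.exp_lt_exp.mpr (by linarith)
    have h2 : Real.exp (-Real.log 2) = 1 / 2 := by
      rw [Real.exp_neg, Real.exp_log two_pos]; norm_num
    calc U₀ / 2 = U₀ * (1 / 2) := by ring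
      _ < U₀ * Real.exp (-(2 * (M * L₀ ^ (-q) * Z))) := by
          rw [← h2]; exact mul_lt_mul_of_pos_left h1 hU
  refine ⟨fun T₁ T₂ h => hanti h, ⨅ T, U T, ?_, tendsto_atTop_ciInf hanti ⟨m, ?_⟩⟩
  · exact lt_of_lt_of_le hmgt (le_ciInf hmlb)
  · rintro x ⟨T, rfl⟩
    exact hmlb T
end
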